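/- arXiv:2410.18512 — 3 statements merged into one kernel-verified Lean document; each statement's English description precedes it below -/
import Mathlib

section
/- Theorem 3: If f and g are injective and the splitting condition is satisfied, then ℙ⁻(S) = 1. -/
open MeasureTheory Filter Topology Set
open scoped BigOperators

noncomputable section

/-- Tail sum ∑_{j ≥ i} p_j. -/
def tailSum (p : ℕ → ℝ) (i : ℕ) : ℝ := ∑' j : ℕ, p (i + j)

/-- Invariant distribution m_i = (∑_{j≥i} p_j)/(1+E). -/
def mdist (p : ℕ → ℝ) (E : ℝ) (i : ℕ) : ℝ := tailSum p i / (1 + E)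

/-- Transition matrix entries: p_{0j} = p_j, p_{(k+1)k} = 1, else 0. -/
def Ptrans (p : ℕ → ℝ) (i j : ℕ) : ℝ := if i = 0 then p j else if i = j + 1 then 1 else 0

/-- Reversed transition matrix q_{ij} = (m_j / m_i) · p_{ji}. -/
def qtrans (p : ℕ → ℝ) (E : ℝ) (i j : ℕ) : ℝ := mdist p E j / mdist p E i * Ptrans p j i

/-- Cylinder set of length n determined by the first n values of ξ. -/
def cyl (ξ : ℕ → ℕ) (n : ℕ) : Set (ℕ → ℕ) := {ω | ∀ i < n, ω i = ξ i}

/-- Probability assigned by ℙ⁻ to the cylinder [ξ₀,…,ξ_{n-1}]. -/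
def cylProbQ (p : ℕ → ℝ) (E : ℝ) (ξ : ℕ → ℕ) (n : ℕ) : ℝ :=
  mdist p E (ξ 0) * ∏ i ∈ Finset.range (n - 1), qtrans p E (ξ i) (ξ (i + 1))

/-- Probability assigned by ℙ to the cylinder [ξ₀,…,ξ_{n-1}]. -/
def cylProbP (p : ℕ → ℝ) (E : ℝ) (ξ : ℕ → ℕ) (n : ℕ) : ℝ :=
  mdist p E (ξ 0) * ∏ i ∈ Finset.range (n - 1), Ptrans p (ξ i) (ξ (i + 1))

/-- The family f₀ = g, f_k = f for k ≥ 1. -/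
def fseq (a b : ℝ) (g f : Set.Icc a b → Set.Icc a b) : ℕ → Set.Icc a b → Set.Icc a b :=
  fun k => if k = 0 then g else f

/-- itf fI ξ n = f_{ξ₀} ∘ f_{ξ₁} ∘ ⋯ ∘ f_{ξ_{n-1}}. -/
def itf (a b : ℝ) (fI : ℕ → Set.Icc a b → Set.Icc a b) (ξ : ℕ → ℕ) :
    ℕ → Set.Icc a b → Set.Icc a b
  | 0 => id
  | n + 1 => fun x => itf a b fI ξ n (fI (ξ n) x)

/-- itfRev fI a n = f_{a_{n-1}} ∘ ⋯ ∘ f_{a_0}  (i.e. f_{a_n}∘⋯∘f_{a_1} with 1-based indexing). -/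
def itfRev (a b : ℝ) (fI : ℕ → Set.Icc a b → Set.Icc a b) (c : ℕ → ℕ) :
    ℕ → Set.Icc a b → Set.Icc a b
  | 0 => id
  | n + 1 => fun x => fI (c n) (itfRev a b fI c n x)

/-- I_ξ = ⋂_{n ≥ 1} (f_{ξ₀}∘⋯∘f_{ξ_{n-1}})(I). -/
def Iset (a b : ℝ) (fI : ℕ → Set.Icc a b → Set.Icc a b) (ξ : ℕ → ℕ) : Set (Set.Icc a b) :=
  ⋂ n : ℕ, itf a b fI ξ (n + 1) '' Set.univ

/-- S = {ξ : diam I_ξ = 0}. -/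
def Sset (a b : ℝ) (fI : ℕ → Set.Icc a b → Set.Icc a b) : Set (ℕ → ℕ) :=
  {ξ | EMetric.diam (Iset a b fI ξ) = 0}

/-- The j-th sliceM of a measure on ℕ × I:  μ_j(C) = μ̂({j} × C). -/
def sliceM (a b : ℝ) (μ : Measure (ℕ × Set.Icc a b)) (k : ℕ) : Measure (Set.Icc a b) :=
  Measure.map Prod.snd (μ.restrict ({k} ×ˢ (Set.univ : Set (Set.Icc a b))))

/-- The Markov operator T:  (Tμ̂)({j}×C) = μ_{j+1}(f_j⁻¹ C) + p_j·μ₀(f_j⁻¹ C). -/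
def TOp (a b : ℝ) (p : ℕ → ℝ) (fI : ℕ → Set.Icc a b → Set.Icc a b)
    (μ : Measure (ℕ × Set.Icc a b)) : Measure (ℕ × Set.Icc a b) :=
  Measure.sum fun j =>
    Measure.map (fun x => (j, fI j x))
      (sliceM a b μ (j + 1) + ENNReal.ofReal (p j) • sliceM a b μ 0)

/-- Extend ξ : Fin n → ℕ to ℕ → ℕ by 0. -/
def padSeq {n : ℕ} (ξ : Fin n → ℕ) : ℕ → ℕ := fun i => if h : i < n then ξ ⟨i, h⟩ else 0

/-- S_nˣ = {ξ : x ∈ I_ξⁿ}. -/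
def SnX (a b : ℝ) (fI : ℕ → Set.Icc a b → Set.Icc a b) (x : Set.Icc a b) (n : ℕ) :
    Set (ℕ → ℕ) :=
  {ξ | x ∈ itf a b fI ξ n '' Set.univ}

/-- Σ_n^W = {ω : σ^{iN}(ω) ∉ W for i = 0,…,n-1}, for W the cylinder [ξ₀,…,ξ_{N-1}]. -/
def SigW (ξ : ℕ → ℕ) (N n : ℕ) : Set (ℕ → ℕ) :=
  {ω | ∀ i < n, ¬ (∀ k < N, ω (i * N + k) = ξ k)}

open Classical in
/-- The block-replacement map H_n: replace every length-N block equal to (ξ₀,…,ξ_{N-1})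
by (η₀,…,η_{N-1}). -/
noncomputable def Hn (ξ η : ℕ → ℕ) (N : ℕ) (c : ℕ → ℕ) : ℕ → ℕ :=
  fun i => if (∀ k < N, c (i / N * N + k) = ξ k) then η (i % N) else c i

/-- The splitting condition. -/
def Splitting (a b : ℝ) (fI : ℕ → Set.Icc a b → Set.Icc a b) (P : Measure (ℕ → ℕ)) : Prop :=
  ∃ (l r : ℕ) (c d : ℕ → ℕ), 1 ≤ l ∧ 1 ≤ r ∧
    0 < P (cyl c l) ∧ 0 < P (cyl d r) ∧ c (l - 1) = d (r - 1) ∧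
    (itfRev a b fI c l '' Set.univ) ∩ (itfRev a b fI d r '' Set.univ) = ∅
-- ============ Part I : real analysis lemmas ============

section RealPart

variable {p : ℕ → ℝ} {E : ℝ}

lemma summable_shift (hp1 : Summable p) (i : ℕ) : Summable fun j => p (i + j) :=
  hp1.comp_injective (fun x y h => by omega)

lemma tailSum_succ (hp1 : Summable p) (i : ℕ) : tailSum p i = p i + tailSum p (i + 1) := by
  have h := Summable.tsum_eq_zero_add (summable_shift hp1 i)
  rw [tailSum, h, Nat.add_zero]
  congr 1
  rw [tailSum]
  exact tsum_congr fun j => by congr 1; omega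

lemma tailSum_nonneg (hp : ∀ n, 0 ≤ p n) (i : ℕ) : 0 ≤ tailSum p i :=
  tsum_nonneg fun j => hp _

lemma tailSum_zero (hp1 : HasSum p 1) : tailSum p 0 = 1 := by
  rw [tailSum]
  have : (fun j => p (0 + j)) = p := funext fun j => by rw [Nat.zero_add]
  rw [this, hp1.tsum_eq]

lemma tailSum_pos (hp : ∀ n, 0 ≤ p n) (hp1 : Summable p)
    (hsupp : ∀ N : ℕ, ∃ n, N ≤ n ∧ 0 < p n) (i : ℕ) : 0 < tailSum p i := by
  obtain ⟨n, hin, hpn⟩ := hsupp i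
  have h : p (i + (n - i)) ≤ tailSum p i :=
    Summable.le_tsum (summable_shift hp1 i) _ (fun j _ => hp _)
  rw [show i + (n - i) = n by omega] at h
  linarith

lemma tailSum_tendsto (hp1 : Summable p) : Tendsto (tailSum p) atTop (𝓝 0) := by
  have h : tailSum p = fun i => ∑' k, p (k + i) :=
    funext fun i => tsum_congr fun j => by rw [add_comm]
  rw [h]
  exact tendsto_sum_nat_add p

lemma E_nonneg (hp : ∀ n, 0 ≤ p n) (hE : E = ∑' n : ℕ, (n : ℝ) * p n) : 0 ≤ E := by
  rw [hE]
  exact tsum_nonneg fun n => mul_nonneg (Nat.cast_nonneg n) (hp n)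

lemma onePlusE_pos (hp : ∀ n, 0 ≤ p n) (hE : E = ∑' n : ℕ, (n : ℝ) * p n) : 0 < 1 + E := by
  have := E_nonneg hp hE; linarith

lemma mdist_pos (hp : ∀ n, 0 ≤ p n) (hp1 : Summable p)
    (hsupp : ∀ N : ℕ, ∃ n, N ≤ n ∧ 0 < p n) (hE : E = ∑' n : ℕ, (n : ℝ) * p n) (i : ℕ) :
    0 < mdist p E i :=
  div_pos (tailSum_pos hp hp1 hsupp i) (onePlusE_pos hp hE)

lemma mdist_tendsto (hp1 : Summable p) : Tendsto (mdist p E) atTop (𝓝 0) := by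
  have h := (tailSum_tendsto hp1).div_const (1 + E)
  rw [zero_div] at h
  exact h

lemma Ptrans_nonneg (hp : ∀ n, 0 ≤ p n) (i j : ℕ) : 0 ≤ Ptrans p i j := by
  rw [Ptrans]; split_ifs <;> first | exact hp _ | norm_num

lemma qtrans_nonneg (hp : ∀ n, 0 ≤ p n) (hp1 : Summable p)
    (hsupp : ∀ N : ℕ, ∃ n, N ≤ n ∧ 0 < p n) (hE : E = ∑' n : ℕ, (n : ℝ) * p n) (i j : ℕ) :
    0 ≤ qtrans p E i j :=
  mul_nonneg (le_of_lt (div_pos (mdist_pos hp hp1 hsupp hE j) (mdist_pos hp hp1 hsupp hE i)))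
    (Ptrans_nonneg hp j i)

lemma qtrans_succ (i : ℕ) : qtrans p E i (i + 1) = mdist p E (i + 1) / mdist p E i := by
  simp [qtrans, Ptrans]

lemma qtrans_zero (i : ℕ) : qtrans p E i 0 = mdist p E 0 / mdist p E i * p i := by
  simp [qtrans, Ptrans]

lemma mdist_div (hp : ∀ n, 0 ≤ p n) (hE : E = ∑' n : ℕ, (n : ℝ) * p n) (i j : ℕ) :
    mdist p E j / mdist p E i = tailSum p j / tailSum p i := by
  rw [mdist, mdist, div_div_div_comm, div_self (onePlusE_pos hp hE).ne', div_one]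

lemma qtrans_other {i j : ℕ} (h0 : j ≠ 0) (hs : j ≠ i + 1) : qtrans p E i j = 0 := by
  rw [qtrans, Ptrans, if_neg h0, if_neg hs, mul_zero]

lemma qtrans_le_one (hp : ∀ n, 0 ≤ p n) (hp1sum : HasSum p 1)
    (hsupp : ∀ N : ℕ, ∃ n, N ≤ n ∧ 0 < p n) (hE : E = ∑' n : ℕ, (n : ℝ) * p n) (i j : ℕ) :
    qtrans p E i j ≤ 1 := by
  have hp1 : Summable p := hp1sum.summable
  have hti : 0 < tailSum p i := tailSum_pos hp hp1 hsupp i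
  have htj1 : 0 ≤ tailSum p (i + 1) := tailSum_nonneg hp (i + 1)
  have h1E : 0 < 1 + E := onePlusE_pos hp hE
  rcases eq_or_ne j 0 with rfl | hj0
  · rw [qtrans_zero, mdist_div hp hE, tailSum_zero hp1sum]
    have hpi : p i ≤ tailSum p i := by
      have := tailSum_succ hp1 i; linarith
    rw [show 1 / tailSum p i * p i = p i / tailSum p i by ring, div_le_one hti]
    exact hpi
  rcases eq_or_ne j (i + 1) with rfl | hjs
  · rw [qtrans_succ, mdist_div hp hE, div_le_one hti]
    have := tailSum_succ hp1 i
    have := hp i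
    linarith
  · rw [qtrans_other hj0 hjs]; norm_num

end RealPart
-- ============ Part II : cylinder lemmas ============

section CylPart

variable {p : ℕ → ℝ} {E : ℝ}

lemma cylProbQ_nonneg (hp : ∀ n, 0 ≤ p n) (hp1 : Summable p)
    (hsupp : ∀ N : ℕ, ∃ n, N ≤ n ∧ 0 < p n) (hE : E = ∑' n : ℕ, (n : ℝ) * p n)
    (ξ : ℕ → ℕ) (n : ℕ) : 0 ≤ cylProbQ p E ξ n :=
  mul_nonneg (mdist_pos hp hp1 hsupp hE _).le
    (Finset.prod_nonneg fun i _ => qtrans_nonneg hp hp1 hsupp hE _ _)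

lemma cylProbQ_add (ξ : ℕ → ℕ) (m k : ℕ) :
    cylProbQ p E ξ (m + 1 + k) =
      cylProbQ p E ξ (m + 1) * ∏ i ∈ Finset.range k, qtrans p E (ξ (m + i)) (ξ (m + i + 1)) := by
  rw [cylProbQ, cylProbQ, show m + 1 + k - 1 = m + k by omega, show m + 1 - 1 = m by omega,
    Finset.prod_range_add]
  ring

lemma cyl_measurableSet (ξ : ℕ → ℕ) (n : ℕ) : MeasurableSet (cyl ξ n) := by
  have h : cyl ξ n = ⋂ i ∈ Finset.range n, (fun ω : ℕ → ℕ => ω i) ⁻¹' {ξ i} := by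
    ext ω; simp [cyl]
  rw [h]
  exact MeasurableSet.biInter (Finset.range n).countable_toSet
    (fun i _ => measurable_pi_apply i (measurableSet_singleton _))

lemma mem_cyl_pad {n : ℕ} (w : Fin n → ℕ) (ω : ℕ → ℕ) :
    ω ∈ cyl (padSeq w) n ↔ ∀ i : Fin n, ω i = w i := by
  constructor
  · intro h i
    have h2 := h i i.isLt
    rw [padSeq] at h2
    rw [h2, dif_pos i.isLt]
  · intro h i hi
    rw [padSeq, dif_pos hi]
    exact h ⟨i, hi⟩

lemma mem_cyl_res (ω : ℕ → ℕ) (n : ℕ) :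
    ω ∈ cyl (padSeq (fun i : Fin n => ω i)) n :=
  (mem_cyl_pad _ _).2 fun _ => rfl

lemma cyl_pad_disjoint {n : ℕ} {w w' : Fin n → ℕ} (h : w ≠ w') :
    Disjoint (cyl (padSeq w) n) (cyl (padSeq w') n) := by
  rw [Set.disjoint_left]
  intro ω hw hw'
  apply h
  funext i
  rw [← (mem_cyl_pad w ω).1 hw i, ← (mem_cyl_pad w' ω).1 hw' i]

lemma cyl_anti (ξ : ℕ → ℕ) {m n : ℕ} (h : m ≤ n) : cyl ξ n ⊆ cyl ξ m :=
  fun ω hω i hi => hω i (lt_of_lt_of_le hi h)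

end CylPart

-- ============ Part III : geometry of itf ============

section GeomPart

variable {a b : ℝ} {fI : ℕ → Set.Icc a b → Set.Icc a b}

lemma itf_congr {ω ω' : ℕ → ℕ} {n : ℕ} (h : ∀ i < n, ω i = ω' i) :
    itf a b fI ω n = itf a b fI ω' n := by
  induction n with
  | zero => rfl
  | succ n ih =>
    funext x
    show itf a b fI ω n (fI (ω n) x) = itf a b fI ω' n (fI (ω' n) x)
    rw [h n (Nat.lt_succ_self n), ih (fun i hi => h i (Nat.lt_succ_of_lt hi))]

lemma itf_add (ω : ℕ → ℕ) (m k : ℕ) (x : Set.Icc a b) :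
    itf a b fI ω (m + k) x = itf a b fI ω m (itf a b fI (fun i => ω (m + i)) k x) := by
  induction k generalizing x with
  | zero => rfl
  | succ k ih =>
    show itf a b fI ω (m + k) (fI (ω (m + k)) x) = _
    rw [ih]
    rfl

lemma itfRev_shift (w : ℕ → ℕ) (n : ℕ) (x : Set.Icc a b) :
    itfRev a b fI w (n + 1) x = itfRev a b fI (fun i => w (i + 1)) n (fI (w 0) x) := by
  induction n with
  | zero => rfl
  | succ n ih =>
    show fI (w (n + 1)) (itfRev a b fI w (n + 1) x) = _
    rw [ih]
    rfl

lemma itf_eq_itfRev (w η : ℕ → ℕ) (n : ℕ) (h : ∀ k, k < n → η k = w (n - 1 - k))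
    (x : Set.Icc a b) : itf a b fI η n x = itfRev a b fI w n x := by
  induction n generalizing w η x with
  | zero => rfl
  | succ n ih =>
    have hn : η n = w 0 := by
      have h2 := h n (Nat.lt_succ_self n)
      rwa [show n + 1 - 1 - n = 0 by omega] at h2
    show itf a b fI η n (fI (η n) x) = _
    rw [hn, itfRev_shift]
    exact ih (fun i => w (i + 1)) η
      (fun k hk => by
        have h2 := h k (Nat.lt_succ_of_lt hk)
        rw [h2]
        congr 1
        omega) _

lemma itfRev_congr {w w' : ℕ → ℕ} {n : ℕ} (h : ∀ i < n, w i = w' i) :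
    itfRev a b fI w n = itfRev a b fI w' n := by
  induction n with
  | zero => rfl
  | succ n ih =>
    funext x
    show fI (w n) (itfRev a b fI w n x) = fI (w' n) (itfRev a b fI w' n x)
    rw [h n (Nat.lt_succ_self n), ih (fun i hi => h i (Nat.lt_succ_of_lt hi))]

lemma itfRev_add (w : ℕ → ℕ) (m k : ℕ) (x : Set.Icc a b) :
    itfRev a b fI w (m + k) x = itfRev a b fI (fun i => w (m + i)) k (itfRev a b fI w m x) := by
  induction k with
  | zero => rfl
  | succ k ih =>
    show fI (w (m + k)) (itfRev a b fI w (m + k) x) = _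
    rw [ih]
    rfl

lemma itf_injective (hinj : ∀ k, Function.Injective (fI k)) (ω : ℕ → ℕ) (n : ℕ) :
    Function.Injective (itf a b fI ω n) := by
  induction n with
  | zero => exact fun x y h => h
  | succ n ih =>
    intro x y h
    exact hinj _ (ih h)

lemma itfRev_injective (hinj : ∀ k, Function.Injective (fI k)) (w : ℕ → ℕ) (n : ℕ) :
    Function.Injective (itfRev a b fI w n) := by
  induction n with
  | zero => exact fun x y h => h
  | succ n ih =>
    intro x y h
    exact ih (hinj _ h)

lemma itf_continuous (hc : ∀ k, Continuous (fI k)) (ω : ℕ → ℕ) (n : ℕ) :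
    Continuous (itf a b fI ω n) := by
  induction n with
  | zero => exact continuous_id
  | succ n ih => exact ih.comp (hc _)

lemma itf_image_le (ω : ℕ → ℕ) (m k : ℕ) :
    itf a b fI ω (m + k) '' Set.univ ⊆ itf a b fI ω m '' Set.univ := by
  rintro y ⟨x, -, rfl⟩
  exact ⟨itf a b fI (fun i => ω (m + i)) k x, trivial, (itf_add ω m k x).symm⟩

lemma itf_image_antitone (ω : ℕ → ℕ) {m n : ℕ} (h : m ≤ n) :
    itf a b fI ω n '' Set.univ ⊆ itf a b fI ω m '' Set.univ := by
  have h2 := itf_image_le (fI := fI) ω m (n - m)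
  rwa [show m + (n - m) = n by omega] at h2

end GeomPart

section FseqPart

variable {a b : ℝ} {f g : Set.Icc a b → Set.Icc a b}

lemma fseq_injective (hfi : Function.Injective f) (hgi : Function.Injective g) (k : ℕ) :
    Function.Injective (fseq a b g f k) := by
  unfold fseq; split_ifs; exacts [hgi, hfi]

lemma fseq_continuous (hfc : Continuous f) (hgc : Continuous g) (k : ℕ) :
    Continuous (fseq a b g f k) := by
  unfold fseq; split_ifs; exacts [hgc, hfc]

end FseqPart
-- ============ Part IV : round times ============

/-- `RTim L ω k j`: `j` is the k-th greedy "zero time" of `ω`, with spacing `L`. -/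
def RTim (L : ℕ) (ω : ℕ → ℕ) : ℕ → ℕ → Prop
  | 0, j => ω j = 0 ∧ ∀ i < j, ω i ≠ 0
  | (k + 1), j => ω j = 0 ∧ ∃ j', RTim L ω k j' ∧ j' + L ≤ j ∧
      ∀ i, j' + L ≤ i → i < j → ω i ≠ 0

lemma RTim_zero_at {L : ℕ} {ω : ℕ → ℕ} {k j : ℕ} (h : RTim L ω k j) : ω j = 0 := by
  cases k <;> exact h.1

lemma RTim_unique {L : ℕ} {ω : ℕ → ℕ} :
    ∀ {k j j'}, RTim L ω k j → RTim L ω k j' → j = j' := by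
  intro k
  induction k with
  | zero =>
    intro j j' hj hj'
    by_contra hne
    rcases Nat.lt_or_ge j j' with h | h
    · exact hj'.2 j h hj.1
    · rcases Nat.lt_or_ge j' j with h2 | h2
      · exact hj.2 j' h2 hj'.1
      · omega
  | succ k ih =>
    intro j j' hj hj'
    obtain ⟨h0, j1, hj1, hle, hmin⟩ := hj
    obtain ⟨h0', j1', hj1', hle', hmin'⟩ := hj'
    have hjj : j1 = j1' := ih hj1 hj1'
    subst hjj
    by_contra hne
    rcases Nat.lt_or_ge j j' with h | h
    · exact hmin' j hle h h0
    · rcases Nat.lt_or_ge j' j with h2 | h2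
      · exact hmin j' hle' h2 h0'
      · omega

lemma RTim_prefix {L : ℕ} {ω ω' : ℕ → ℕ} :
    ∀ {k j}, RTim L ω k j → (∀ i ≤ j, ω' i = ω i) → RTim L ω' k j := by
  intro k
  induction k with
  | zero =>
    intro j hj hagree
    exact ⟨by rw [hagree j le_rfl]; exact hj.1,
      fun i hi => by rw [hagree i (le_of_lt hi)]; exact hj.2 i hi⟩
  | succ k ih =>
    intro j hj hagree
    obtain ⟨h0, j1, hj1, hle, hmin⟩ := hj
    refine ⟨by rw [hagree j le_rfl]; exact h0, j1,
      ih hj1 (fun i hi => hagree i (le_trans hi (by omega))), hle,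
      fun i h1 h2 => by rw [hagree i (le_of_lt h2)]; exact hmin i h1 h2⟩

lemma RTim_exists {L : ℕ} {ω : ℕ → ℕ} (hz : ∀ m, ∃ j, m ≤ j ∧ ω j = 0) :
    ∀ k, ∃ j, RTim L ω k j := by
  intro k
  induction k with
  | zero =>
    obtain ⟨j, _, hj⟩ := hz 0
    have hex : ∃ j, ω j = 0 := ⟨j, hj⟩
    exact ⟨Nat.find hex, Nat.find_spec hex, fun i hi => Nat.find_min hex hi⟩
  | succ k ih =>
    obtain ⟨j', hj'⟩ := ih
    obtain ⟨j, hle, hj⟩ := hz (j' + L)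
    have hex : ∃ i, j' + L ≤ i ∧ ω i = 0 := ⟨j, hle, hj⟩
    refine ⟨Nat.find hex, (Nat.find_spec hex).2, j', hj', (Nat.find_spec hex).1,
      fun i h1 h2 h3 => Nat.find_min hex h2 ⟨h1, h3⟩⟩

-- ============ Part V : blocks and their probabilities ============

/-- The reversal of the word `w` of length `n`. -/
def revW (w : ℕ → ℕ) (n : ℕ) : ℕ → ℕ := fun k => w (n - 1 - k)

/-- Extension of a word `c` of length `l` ending at state `s` by the descent `s-1, …, 0`. -/
def wordExt (c : ℕ → ℕ) (l s : ℕ) : ℕ → ℕ := fun i => if i < l then c i else l + s - 1 - i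

section BlockPart

variable {p : ℕ → ℝ} {E : ℝ}

lemma cylProbQ_congr {ξ ξ' : ℕ → ℕ} {n : ℕ} (hn : 1 ≤ n) (h : ∀ i < n, ξ i = ξ' i) :
    cylProbQ p E ξ n = cylProbQ p E ξ' n := by
  rw [cylProbQ, cylProbQ, h 0 hn]
  congr 1
  exact Finset.prod_congr rfl fun i hi => by
    rw [Finset.mem_range] at hi
    rw [h i (by omega), h (i + 1) (by omega)]

/-- The q-probability of a block: `θ w n = ∏ q(rev w k, rev w (k+1))`. -/
def thetaQ (p : ℕ → ℝ) (E : ℝ) (w : ℕ → ℕ) (n : ℕ) : ℝ :=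
  ∏ k ∈ Finset.range (n - 1), qtrans p E (revW w n k) (revW w n (k + 1))

lemma thetaQ_pos (hp : ∀ n, 0 ≤ p n) (hp1 : Summable p)
    (hsupp : ∀ N : ℕ, ∃ n, N ≤ n ∧ 0 < p n) (hE : E = ∑' n : ℕ, (n : ℝ) * p n)
    {w : ℕ → ℕ} {n : ℕ} (hPt : ∀ j, j < n - 1 → 0 < Ptrans p (w j) (w (j + 1))) :
    0 < thetaQ p E w n := by
  apply Finset.prod_pos
  intro k hk
  rw [Finset.mem_range] at hk
  have h1 : revW w n k = w (n - 2 - k + 1) := by rw [revW]; congr 1; omega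
  have h2 : revW w n (k + 1) = w (n - 2 - k) := by rw [revW]; congr 1; omega
  rw [h1, h2, qtrans]
  exact mul_pos (div_pos (mdist_pos hp hp1 hsupp hE _) (mdist_pos hp hp1 hsupp hE _))
    (hPt _ (by omega))

lemma thetaQ_le_one (hp : ∀ n, 0 ≤ p n) (hp1 : HasSum p 1)
    (hsupp : ∀ N : ℕ, ∃ n, N ≤ n ∧ 0 < p n) (hE : E = ∑' n : ℕ, (n : ℝ) * p n)
    (w : ℕ → ℕ) (n : ℕ) : thetaQ p E w n ≤ 1 :=
  Finset.prod_le_one (fun i _ => qtrans_nonneg hp hp1.summable hsupp hE _ _)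
    (fun i _ => qtrans_le_one hp hp1 hsupp hE _ _)

/-- Extending a word of length `j+1` (ending in `0`) by a block whose reversal ends in 0. -/
lemma cylProbQ_block (ξ : ℕ → ℕ) (j n : ℕ) (w : ℕ → ℕ) (hn : 1 ≤ n)
    (hblock : ∀ k, k < n → ξ (j + k) = revW w n k) :
    cylProbQ p E ξ (j + n) = cylProbQ p E ξ (j + 1) * thetaQ p E w n := by
  have h : j + n = j + 1 + (n - 1) := by omega
  rw [h, cylProbQ_add, thetaQ]
  congr 1
  refine Finset.prod_congr rfl fun i hi => ?_
  rw [Finset.mem_range] at hi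
  rw [hblock i (by omega), show j + i + 1 = j + (i + 1) by omega, hblock (i + 1) (by omega)]

/-- Positivity of transitions along `wordExt`. -/
lemma wordExt_Ptrans_pos {c : ℕ → ℕ} {l s : ℕ} (hl : 1 ≤ l) (hcs : c (l - 1) = s)
    (hc : ∀ j, j < l - 1 → 0 < Ptrans p (c j) (c (j + 1))) :
    ∀ j, j < l + s - 1 → 0 < Ptrans p (wordExt c l s j) (wordExt c l s (j + 1)) := by
  intro j hj
  by_cases h1 : j + 1 < l
  · rw [wordExt, wordExt, if_pos (by omega), if_pos h1]
    exact hc j (by omega)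
  by_cases h2 : j < l
  · -- j = l - 1, s ≥ 1
    have hjl : j = l - 1 := by omega
    have hs1 : 1 ≤ s := by omega
    rw [wordExt, wordExt, if_pos h2, if_neg (by omega), hjl, hcs]
    rw [Ptrans, if_neg (by omega), if_pos (by omega)]
    norm_num
  · rw [wordExt, wordExt, if_neg h2, if_neg (by omega)]
    rw [Ptrans, if_neg (by omega), if_pos (by omega)]
    norm_num

lemma wordExt_last {c : ℕ → ℕ} {l s : ℕ} (hl : 1 ≤ l) (hcs : c (l - 1) = s) :
    wordExt c l s (l + s - 1) = 0 := by
  rcases Nat.eq_zero_or_pos s with hs | hs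
  · rw [wordExt, if_pos (by omega), show l + s - 1 = l - 1 by omega, hcs, hs]
  · rw [wordExt, if_neg (by omega)]
    omega

lemma wordExt_congr (c : ℕ → ℕ) (l s : ℕ) : ∀ i < l, wordExt c l s i = c i :=
  fun i hi => if_pos hi

end BlockPart
-- ============ Part VI : block image and telescoping ============

/-- Index type for variable-length words. -/
def SigWord : Type := Σ j : ℕ, (Fin (j + 1) → ℕ)

instance : Countable SigWord := by unfold SigWord; infer_instance

section MainPart

variable {a b : ℝ} {F : ℕ → Set.Icc a b → Set.Icc a b} {p : ℕ → ℝ} {E : ℝ}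

lemma itf_block_image (ω : ℕ → ℕ) (j n : ℕ) (w : ℕ → ℕ)
    (hblock : ∀ k, k < n → ω (j + k) = revW w n k) :
    itf a b F ω (j + n) '' Set.univ = itf a b F ω j '' (itfRev a b F w n '' Set.univ) := by
  have hcomp : ∀ x, itf a b F ω (j + n) x = itf a b F ω j (itfRev a b F w n x) := by
    intro x
    rw [itf_add]
    congr 1
    exact itf_eq_itfRev w (fun i => ω (j + i)) n (fun k hk => hblock k hk) x
  ext y
  constructor
  · rintro ⟨x, -, rfl⟩
    exact ⟨itfRev a b F w n x, ⟨x, trivial, rfl⟩, (hcomp x).symm⟩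
  · rintro ⟨z, ⟨x, -, rfl⟩, rfl⟩
    exact ⟨x, trivial, hcomp x⟩

lemma prod_mdist_ratio (hp : ∀ n, 0 ≤ p n) (hp1 : Summable p)
    (hsupp : ∀ N : ℕ, ∃ n, N ≤ n ∧ 0 < p n) (hE : E = ∑' n : ℕ, (n : ℝ) * p n)
    (t : ℕ) : ∀ M : ℕ,
    (∏ i ∈ Finset.range M, (mdist p E (t + i + 1) / mdist p E (t + i)))
      = mdist p E (t + M) / mdist p E t := by
  intro M
  induction M with
  | zero => simp [div_self (mdist_pos hp hp1 hsupp hE t).ne']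
  | succ M ih =>
    rw [Finset.prod_range_succ, ih]
    have h1 : mdist p E (t + M) ≠ 0 := (mdist_pos hp hp1 hsupp hE _).ne'
    have h2 : mdist p E t ≠ 0 := (mdist_pos hp hp1 hsupp hE _).ne'
    field_simp
    ring_nf

end MainPart
-- ============ Part VII : the recursion step ============

/-- Cylinder attached to a variable-length word. -/
def cylOf (ix : SigWord) : Set (ℕ → ℕ) := cyl (padSeq ix.2) (ix.1 + 1)

/-- Extension of the word `pw` (of length `j+1`) by the reversal of the block `wblk`. -/
def blockExt (pw : ℕ → ℕ) (j : ℕ) (wblk : ℕ → ℕ) (n : ℕ) : ℕ → ℕ :=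
  fun i => if i ≤ j then pw i else revW wblk n (i - j)

lemma blockExt_lt {pw : ℕ → ℕ} {j : ℕ} {wblk : ℕ → ℕ} {n : ℕ} {i : ℕ} (hi : i < j + 1) :
    blockExt pw j wblk n i = pw i := if_pos (by omega)

lemma blockExt_block {pw : ℕ → ℕ} {j : ℕ} {wblk : ℕ → ℕ} {n : ℕ}
    (hzero : pw j = 0) (hlast : wblk (n - 1) = 0) :
    ∀ kk, kk < n → blockExt pw j wblk n (j + kk) = revW wblk n kk := by
  intro kk hkk
  rcases Nat.eq_zero_or_pos kk with rfl | hpos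
  · rw [show j + 0 = j by omega, blockExt, if_pos (le_refl j), revW,
      show n - 1 - 0 = n - 1 by omega, hlast, hzero]
  · rw [blockExt, if_neg (by omega), show j + kk - j = kk by omega]

section MainPart2

variable {a b : ℝ}

/-- The `k`-th round survival set. -/
def Vset (a b : ℝ) (F : ℕ → Set.Icc a b → Set.Icc a b) (L : ℕ) (x : Set.Icc a b)
    (k : ℕ) : Set (ℕ → ℕ) :=
  {ω | ∃ j, RTim L ω k j ∧ x ∈ itf a b F ω (j + L) '' Set.univ}

/-- The index set of prefixes used to decompose `Vset (k+1)`. -/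
def Mset (a b : ℝ) (F : ℕ → Set.Icc a b → Set.Icc a b) (L : ℕ) (x : Set.Icc a b)
    (k : ℕ) : Set SigWord :=
  {ix | RTim L (padSeq ix.2) (k + 1) ix.1 ∧
    ∃ j0, RTim L (padSeq ix.2) k j0 ∧ x ∈ itf a b F (padSeq ix.2) (j0 + L) '' Set.univ}

lemma step_est
    (F : ℕ → Set.Icc a b → Set.Icc a b)
    (hFinj : ∀ k, Function.Injective (F k))
    (p : ℕ → ℝ) (E : ℝ)
    (hp : ∀ n, 0 ≤ p n) (hp1 : HasSum p 1)
    (hsupp : ∀ N : ℕ, ∃ n, N ≤ n ∧ 0 < p n) (hE : E = ∑' n : ℕ, (n : ℝ) * p n)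
    (Pm : Measure (ℕ → ℕ)) [IsProbabilityMeasure Pm]
    (hPm : ∀ n, 1 ≤ n → ∀ ξ : ℕ → ℕ, Pm (cyl ξ n) = ENNReal.ofReal (cylProbQ p E ξ n))
    (nu nv : ℕ) (hnu : 1 ≤ nu) (hnv : 1 ≤ nv)
    (cs ds : ℕ → ℕ) (hcs0 : cs (nu - 1) = 0) (hds0 : ds (nv - 1) = 0)
    (hcsP : ∀ j, j < nu - 1 → 0 < Ptrans p (cs j) (cs (j + 1)))
    (hdsP : ∀ j, j < nv - 1 → 0 < Ptrans p (ds j) (ds (j + 1)))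
    (hdisj : (itfRev a b F cs nu '' Set.univ) ∩ (itfRev a b F ds nv '' Set.univ) = ∅)
    (x : Set.Icc a b) (k : ℕ) :
    Pm (Vset a b F (max nu nv) x (k + 1)) ≤
      ENNReal.ofReal (1 - min (thetaQ p E cs nu) (thetaQ p E ds nv)) *
        Pm (Vset a b F (max nu nv) x k) := by
  classical
  have hp1' : Summable p := hp1.summable
  set L := max nu nv with hLdef
  have hnuL : nu ≤ L := le_max_left _ _
  have hnvL : nv ≤ L := le_max_right _ _
  have hL1 : 1 ≤ L := le_trans hnu hnuL
  set θu := thetaQ p E cs nu with hθudef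
  set θv := thetaQ p E ds nv with hθvdef
  have hθu : 0 < θu := thetaQ_pos hp hp1' hsupp hE hcsP
  have hθv : 0 < θv := thetaQ_pos hp hp1' hsupp hE hdsP
  have hθu1 : θu ≤ 1 := thetaQ_le_one hp hp1 hsupp hE cs nu
  have hθv1 : θv ≤ 1 := thetaQ_le_one hp hp1 hsupp hE ds nv
  set κ := min θu θv with hκdef
  have hκ : 0 < κ := lt_min hθu hθv
  have hκ1 : κ ≤ 1 := le_trans (min_le_left _ _) hθu1
  set ρ : ENNReal := ENNReal.ofReal (1 - κ) with hρdef
  have hJanti : ∀ (ω : ℕ → ℕ) (m n : ℕ), m ≤ n →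
      itf a b F ω n '' Set.univ ⊆ itf a b F ω m '' Set.univ :=
    fun ω m n h => itf_image_antitone (fI := F) ω h
  have hJcongr : ∀ (ω ω' : ℕ → ℕ) (n : ℕ), (∀ i, i < n → ω i = ω' i) →
      itf a b F ω n '' Set.univ = itf a b F ω' n '' Set.univ := by
    intro ω ω' n h
    rw [itf_congr h]
  -- cover
  have h_cover : Vset a b F L x (k + 1) ⊆
      ⋃ ix : ↥(Mset a b F L x k),
        (cylOf ix.1 ∩ {ω | x ∈ itf a b F ω (ix.1.1 + L) '' Set.univ}) := by
    intro ω hω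
    obtain ⟨j, rt, hxJ⟩ := hω
    set w : Fin (j + 1) → ℕ := fun i => ω i with hwdef
    have hag : ∀ i, i ≤ j → padSeq w i = ω i := by
      intro i hi
      rw [padSeq, dif_pos (by omega : i < j + 1)]
    have hMw : (⟨j, w⟩ : SigWord) ∈ Mset a b F L x k := by
      obtain ⟨h0, j1, hj1, hle1, hmin1⟩ := rt
      refine ⟨RTim_prefix (⟨h0, j1, hj1, hle1, hmin1⟩ : RTim L ω (k+1) j) hag, j1,
        RTim_prefix hj1 (fun i hi => hag i (by omega)), ?_⟩
      have hx1 : x ∈ itf a b F ω (j1 + L) '' Set.univ := hJanti ω _ _ (by omega) hxJ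
      rwa [hJcongr (padSeq w) ω (j1 + L) (fun i hi => hag i (by omega))]
    refine Set.mem_iUnion.2 ⟨⟨⟨j, w⟩, hMw⟩, ?_, hxJ⟩
    intro i hi
    have hi' : i < j + 1 := hi
    exact (hag i (by omega)).symm
  -- inclusion into V k
  have h_sub : ∀ ix : ↥(Mset a b F L x k), cylOf ix.1 ⊆ Vset a b F L x k := by
    rintro ⟨⟨j, w⟩, hM⟩ ω hω
    have hMx : RTim L (padSeq w) (k + 1) j ∧ ∃ j0, RTim L (padSeq w) k j0 ∧
        x ∈ itf a b F (padSeq w) (j0 + L) '' Set.univ := hM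
    have hωx : ∀ i, i < j + 1 → ω i = padSeq w i := hω
    obtain ⟨rt1, j0, rt0, hsurv⟩ := hMx
    obtain ⟨h0, j1, hj1, hle1, hmin1⟩ := rt1
    have hj01 : j0 = j1 := RTim_unique rt0 hj1
    have hord : j0 + L ≤ j := by omega
    have hag : ∀ i, i ≤ j → ω i = padSeq w i := fun i hi => hωx i (by omega)
    refine ⟨j0, RTim_prefix rt0 (fun i hi => hag i (by omega)), ?_⟩
    rwa [hJcongr ω (padSeq w) (j0 + L) (fun i hi => hag i (by omega))]
  -- disjointness
  have h_disj : Pairwise (Function.onFun Disjoint fun ix : ↥(Mset a b F L x k) => cylOf ix.1) := by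
    rintro ⟨⟨j, w⟩, hM⟩ ⟨⟨j', w'⟩, hM'⟩ hne
    rw [Function.onFun, Set.disjoint_left]
    intro ω hω hω'
    have hωx : ∀ i, i < j + 1 → ω i = padSeq w i := hω
    have hωx' : ∀ i, i < j' + 1 → ω i = padSeq w' i := hω'
    have hM1 : RTim L (padSeq w) (k + 1) j := hM.1
    have hM1' : RTim L (padSeq w') (k + 1) j' := hM'.1
    have rt : RTim L ω (k + 1) j := RTim_prefix hM1 (fun i hi => hωx i (by omega))
    have rt' : RTim L ω (k + 1) j' := RTim_prefix hM1' (fun i hi => hωx' i (by omega))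
    have hjj : j = j' := RTim_unique rt rt'
    subst hjj
    have hww : w = w' := by
      funext i
      have e1 : ω i = w i := (mem_cyl_pad w ω).1 hω i
      have e2 : ω i = w' i := (mem_cyl_pad w' ω).1 hω' i
      rw [← e1, ← e2]
    subst hww
    exact hne rfl
  -- the kill estimate
  have h_kill : ∀ ix : ↥(Mset a b F L x k),
      Pm (cylOf ix.1 ∩ {ω | x ∈ itf a b F ω (ix.1.1 + L) '' Set.univ}) ≤
        ρ * Pm (cylOf ix.1) := by
    rintro ⟨⟨j, w⟩, hM⟩
    show Pm (cyl (padSeq w) (j + 1) ∩ {ω | x ∈ itf a b F ω (j + L) '' Set.univ}) ≤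
        ρ * Pm (cyl (padSeq w) (j + 1))
    have hM1 : RTim L (padSeq w) (k + 1) j := hM.1
    set pw := padSeq w with hpwdef
    have hzero : pw j = 0 := RTim_zero_at hM1
    set eu : ℕ → ℕ := blockExt pw j cs nu with heudef
    set ev : ℕ → ℕ := blockExt pw j ds nv with hevdef
    have hue : ∀ i, i < j + 1 → eu i = pw i := fun i hi => blockExt_lt hi
    have hve : ∀ i, i < j + 1 → ev i = pw i := fun i hi => blockExt_lt hi
    have hub : ∀ kk, kk < nu → eu (j + kk) = revW cs nu kk := blockExt_block hzero hcs0
    have hvb : ∀ kk, kk < nv → ev (j + kk) = revW ds nv kk := blockExt_block hzero hds0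
    have hQnn : 0 ≤ cylProbQ p E pw (j + 1) := cylProbQ_nonneg hp hp1' hsupp hE _ _
    have hPmC : Pm (cyl pw (j + 1)) = ENNReal.ofReal (cylProbQ p E pw (j + 1)) :=
      hPm _ (by omega) _
    have hcylu : Pm (cyl eu (j + nu)) = ENNReal.ofReal (cylProbQ p E pw (j + 1) * θu) := by
      rw [hPm (j + nu) (by omega) eu, cylProbQ_block eu j nu cs hnu hub,
        cylProbQ_congr (by omega) hue]
    have hcylv : Pm (cyl ev (j + nv)) = ENNReal.ofReal (cylProbQ p E pw (j + 1) * θv) := by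
      rw [hPm (j + nv) (by omega) ev, cylProbQ_block ev j nv ds hnv hvb,
        cylProbQ_congr (by omega) hve]
    have hsubu : cyl eu (j + nu) ⊆ cyl pw (j + 1) := by
      intro ω hω i hi
      rw [hω i (by omega), hue i hi]
    have hsubv : cyl ev (j + nv) ⊆ cyl pw (j + 1) := by
      intro ω hω i hi
      rw [hω i (by omega), hve i hi]
    have himg_u : ∀ ω, ω ∈ cyl eu (j + nu) →
        itf a b F ω (j + nu) '' Set.univ = itf a b F ω j '' (itfRev a b F cs nu '' Set.univ) := by
      intro ω hω
      exact itf_block_image ω j nu cs (fun kk hkk => by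
        rw [hω (j + kk) (by omega), hub kk hkk])
    have himg_v : ∀ ω, ω ∈ cyl ev (j + nv) →
        itf a b F ω (j + nv) '' Set.univ = itf a b F ω j '' (itfRev a b F ds nv '' Set.univ) := by
      intro ω hω
      exact itf_block_image ω j nv ds (fun kk hkk => by
        rw [hω (j + kk) (by omega), hvb kk hkk])
    have hnotboth : ¬ ((∃ ω, ω ∈ cyl eu (j + nu) ∧ x ∈ itf a b F ω (j + L) '' Set.univ) ∧
        (∃ ω, ω ∈ cyl ev (j + nv) ∧ x ∈ itf a b F ω (j + L) '' Set.univ)) := by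
      rintro ⟨⟨ω1, hω1, hx1⟩, ⟨ω2, hω2, hx2⟩⟩
      have hxa : x ∈ itf a b F ω1 j '' (itfRev a b F cs nu '' Set.univ) := by
        rw [← himg_u ω1 hω1]
        exact hJanti ω1 _ _ (by omega) hx1
      have hxb : x ∈ itf a b F ω2 j '' (itfRev a b F ds nv '' Set.univ) := by
        rw [← himg_v ω2 hω2]
        exact hJanti ω2 _ _ (by omega) hx2
      have heq : itf a b F ω2 j = itf a b F ω1 j := by
        apply itf_congr
        intro i hi
        rw [hω2 i (by omega), hω1 i (by omega), hue i (by omega), hve i (by omega)]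
      rw [heq] at hxb
      have hmem : x ∈ itf a b F ω1 j ''
          ((itfRev a b F cs nu '' Set.univ) ∩ (itfRev a b F ds nv '' Set.univ)) := by
        rw [Set.image_inter (itf_injective hFinj ω1 j)]
        exact ⟨hxa, hxb⟩
      rw [hdisj] at hmem
      simp at hmem
    have main_est : ∀ (e : ℕ → ℕ) (n : ℕ) (θ : ℝ), κ ≤ θ →
        Pm (cyl e (j + n)) = ENNReal.ofReal (cylProbQ p E pw (j + 1) * θ) →
        cyl e (j + n) ⊆ cyl pw (j + 1) →
        (∀ ω, ω ∈ cyl e (j + n) → x ∉ itf a b F ω (j + L) '' Set.univ) →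
        Pm (cyl pw (j + 1) ∩ {ω | x ∈ itf a b F ω (j + L) '' Set.univ}) ≤
          ρ * Pm (cyl pw (j + 1)) := by
      intro e n θ hκθ hPe hsub hdead
      have hsubset : cyl pw (j + 1) ∩ {ω | x ∈ itf a b F ω (j + L) '' Set.univ} ⊆
          cyl pw (j + 1) \ cyl e (j + n) := by
        rintro ω ⟨h1, h2⟩
        exact ⟨h1, fun hc => hdead ω hc h2⟩
      calc Pm (cyl pw (j + 1) ∩ {ω | x ∈ itf a b F ω (j + L) '' Set.univ})
          ≤ Pm (cyl pw (j + 1) \ cyl e (j + n)) := measure_mono hsubset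
        _ = Pm (cyl pw (j + 1)) - Pm (cyl e (j + n)) :=
            measure_diff hsub (cyl_measurableSet e (j + n)).nullMeasurableSet
              (measure_ne_top Pm _)
        _ = ENNReal.ofReal (cylProbQ p E pw (j + 1)) -
              ENNReal.ofReal (cylProbQ p E pw (j + 1) * θ) := by rw [hPmC, hPe]
        _ = ENNReal.ofReal (cylProbQ p E pw (j + 1) - cylProbQ p E pw (j + 1) * θ) :=
            (ENNReal.ofReal_sub _ (mul_nonneg hQnn (le_trans hκ.le hκθ))).symm
        _ ≤ ENNReal.ofReal ((1 - κ) * cylProbQ p E pw (j + 1)) := by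
            apply ENNReal.ofReal_le_ofReal
            nlinarith [hQnn, hκθ]
        _ = ρ * ENNReal.ofReal (cylProbQ p E pw (j + 1)) :=
            ENNReal.ofReal_mul (by linarith)
        _ = ρ * Pm (cyl pw (j + 1)) := by rw [hPmC]
    by_cases hSu : ∃ ω, ω ∈ cyl eu (j + nu) ∧ x ∈ itf a b F ω (j + L) '' Set.univ
    · exact main_est ev nv θv (min_le_right _ _) hcylv hsubv
        (fun ω hω hx' => hnotboth ⟨hSu, ⟨ω, hω, hx'⟩⟩)
    · exact main_est eu nu θu (min_le_left _ _) hcylu hsubu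
        (fun ω hω hx' => hSu ⟨ω, hω, hx'⟩)
  -- put everything together
  calc Pm (Vset a b F L x (k + 1))
      ≤ Pm (⋃ ix : ↥(Mset a b F L x k),
          (cylOf ix.1 ∩ {ω | x ∈ itf a b F ω (ix.1.1 + L) '' Set.univ})) :=
        measure_mono h_cover
    _ ≤ ∑' ix : ↥(Mset a b F L x k),
          Pm (cylOf ix.1 ∩ {ω | x ∈ itf a b F ω (ix.1.1 + L) '' Set.univ}) :=
        measure_iUnion_le _
    _ ≤ ∑' ix : ↥(Mset a b F L x k), ρ * Pm (cylOf ix.1) := ENNReal.tsum_le_tsum h_kill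
    _ = ρ * ∑' ix : ↥(Mset a b F L x k), Pm (cylOf ix.1) := ENNReal.tsum_mul_left
    _ ≤ ρ * Pm (Vset a b F L x k) := by
        apply mul_le_mul_right
        rw [← MeasureTheory.measure_iUnion h_disj (fun ix => cyl_measurableSet _ _)]
        exact measure_mono (Set.iUnion_subset h_sub)

end MainPart2
-- ============ Part VIII : the key null lemma ============

/-- Eventually-ascending sequence with prefix `π`. -/
def ascSeq (m : ℕ) (π : Fin (m + 1) → ℕ) : ℕ → ℕ :=
  fun i => if h : i < m + 1 then π ⟨i, h⟩ else π ⟨m, Nat.lt_succ_self m⟩ + (i - m)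

lemma ascSeq_add (m : ℕ) (π : Fin (m + 1) → ℕ) (i : ℕ) :
    ascSeq m π (m + i) = π ⟨m, Nat.lt_succ_self m⟩ + i := by
  rcases Nat.eq_zero_or_pos i with rfl | hi
  · rw [ascSeq, dif_pos (by omega : m + 0 < m + 1)]
    simp
  · rw [ascSeq, dif_neg (by omega)]
    congr 1
    omega

section MainPart3

variable {a b : ℝ}

lemma T_null
    (F : ℕ → Set.Icc a b → Set.Icc a b)
    (hFinj : ∀ k, Function.Injective (F k))
    (p : ℕ → ℝ) (E : ℝ)
    (hp : ∀ n, 0 ≤ p n) (hp1 : HasSum p 1)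
    (hsupp : ∀ N : ℕ, ∃ n, N ≤ n ∧ 0 < p n) (hE : E = ∑' n : ℕ, (n : ℝ) * p n)
    (Pm : Measure (ℕ → ℕ)) [IsProbabilityMeasure Pm]
    (hPm : ∀ n, 1 ≤ n → ∀ ξ : ℕ → ℕ, Pm (cyl ξ n) = ENNReal.ofReal (cylProbQ p E ξ n))
    (nu nv : ℕ) (hnu : 1 ≤ nu) (hnv : 1 ≤ nv)
    (cs ds : ℕ → ℕ) (hcs0 : cs (nu - 1) = 0) (hds0 : ds (nv - 1) = 0)
    (hcsP : ∀ j, j < nu - 1 → 0 < Ptrans p (cs j) (cs (j + 1)))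
    (hdsP : ∀ j, j < nv - 1 → 0 < Ptrans p (ds j) (ds (j + 1)))
    (hdisj : (itfRev a b F cs nu '' Set.univ) ∩ (itfRev a b F ds nv '' Set.univ) = ∅)
    (x : Set.Icc a b) :
    Pm {ω | ∀ n, x ∈ itf a b F ω n '' Set.univ} = 0 := by
  classical
  have hp1' : Summable p := hp1.summable
  set L := max nu nv with hLdef
  set κ := min (thetaQ p E cs nu) (thetaQ p E ds nv) with hκdef
  have hκpos : 0 < κ :=
    lt_min (thetaQ_pos hp hp1' hsupp hE hcsP) (thetaQ_pos hp hp1' hsupp hE hdsP)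
  set ρ := ENNReal.ofReal (1 - κ) with hρdef
  have hbound : ∀ k, Pm (Vset a b F L x k) ≤ ρ ^ k := by
    intro k
    induction k with
    | zero => rw [pow_zero]; exact prob_le_one
    | succ k ih =>
      calc Pm (Vset a b F L x (k + 1))
          ≤ ρ * Pm (Vset a b F L x k) :=
            step_est F hFinj p E hp hp1 hsupp hE Pm hPm nu nv hnu hnv cs ds hcs0 hds0
              hcsP hdsP hdisj x k
        _ ≤ ρ * ρ ^ k := mul_le_mul_right ih ρ
        _ = ρ ^ (k + 1) := (pow_succ' ρ k).symm
  -- the bad sets are null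
  have hBadm : ∀ m : ℕ, Pm {ω : ℕ → ℕ | ∀ j, m ≤ j → ω j ≠ 0} = 0 := by
    intro m
    set N0 : Set (ℕ → ℕ) :=
      ⋃ ix : {ix : SigWord // cylProbQ p E (padSeq ix.2) (ix.1 + 1) ≤ 0}, cylOf ix.1
      with hN0def
    have hN0 : Pm N0 = 0 := by
      rw [hN0def, measure_iUnion_null_iff]
      intro ix
      rw [cylOf, hPm _ (by omega) _]
      exact ENNReal.ofReal_eq_zero.2 ix.2
    have hsing : ∀ π : Fin (m + 1) → ℕ, Pm {ascSeq m π} = 0 := by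
      intro π
      set t := π ⟨m, Nat.lt_succ_self m⟩ with htdef
      set Q1 := cylProbQ p E (ascSeq m π) (m + 1) with hQ1def
      have hmono : ∀ M : ℕ,
          Pm {ascSeq m π} ≤ ENNReal.ofReal (Q1 * (mdist p E (t + M) / mdist p E t)) := by
        intro M
        have h1 : Pm {ascSeq m π} ≤ Pm (cyl (ascSeq m π) (m + 1 + M)) :=
          measure_mono (Set.singleton_subset_iff.2 (fun i _ => rfl))
        rw [hPm _ (by omega) _] at h1
        have h2 : cylProbQ p E (ascSeq m π) (m + 1 + M)
            = Q1 * (mdist p E (t + M) / mdist p E t) := by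
          rw [cylProbQ_add, hQ1def]
          congr 1
          rw [← prod_mdist_ratio hp hp1' hsupp hE t M]
          refine Finset.prod_congr rfl fun i _ => ?_
          rw [ascSeq_add m π i, show m + i + 1 = m + (i + 1) by omega, ascSeq_add m π (i + 1),
            ← htdef, show t + (i + 1) = t + i + 1 by omega, qtrans_succ]
        rwa [h2] at h1
      have hreal : Tendsto (fun M : ℕ => Q1 * (mdist p E (t + M) / mdist p E t)) atTop (𝓝 0) := by
        have h1 : Tendsto (fun M : ℕ => mdist p E (t + M)) atTop (𝓝 0) := by
          have h2 := (mdist_tendsto (E := E) hp1').comp (tendsto_add_atTop_nat t)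
          have h3 : ((mdist p E) ∘ fun n : ℕ => n + t) = fun M : ℕ => mdist p E (t + M) := by
            funext M
            simp [Function.comp, Nat.add_comm]
          rwa [h3] at h2
        have h4 := (h1.div_const (mdist p E t)).const_mul Q1
        simpa using h4
      have htendE : Tendsto (fun M : ℕ =>
          ENNReal.ofReal (Q1 * (mdist p E (t + M) / mdist p E t))) atTop (𝓝 0) := by
        have := ENNReal.tendsto_ofReal hreal
        simpa using this
      exact le_antisymm (ge_of_tendsto' htendE hmono) zero_le
    have hsubBm : {ω : ℕ → ℕ | ∀ j, m ≤ j → ω j ≠ 0} ⊆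
        N0 ∪ ⋃ π : Fin (m + 1) → ℕ, {ascSeq m π} := by
      intro ω hω
      by_cases hN : ω ∈ N0
      · exact Or.inl hN
      right
      have hQpos : ∀ n : ℕ, 0 < cylProbQ p E ω (n + 1) := by
        intro n
        rcases lt_or_ge 0 (cylProbQ p E ω (n + 1)) with h | h
        · exact h
        exfalso
        apply hN
        refine Set.mem_iUnion.2 ⟨⟨⟨n, fun i : Fin (n + 1) => ω i⟩, ?_⟩, ?_⟩
        · show cylProbQ p E (padSeq (fun i : Fin (n + 1) => ω i)) (n + 1) ≤ 0
          rwa [cylProbQ_congr (by omega) (fun i hi => by rw [padSeq, dif_pos hi])]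
        · exact mem_cyl_res ω (n + 1)
      have hstep : ∀ i, m ≤ i → ω (i + 1) = ω i + 1 := by
        intro i him
        have hQ := hQpos (i + 1)
        rw [cylProbQ, show i + 1 + 1 - 1 = i + 1 by omega] at hQ
        have hfac : qtrans p E (ω i) (ω (i + 1)) ≠ 0 := by
          intro h0
          have hz : (∏ kk ∈ Finset.range (i + 1), qtrans p E (ω kk) (ω (kk + 1))) = 0 :=
            Finset.prod_eq_zero (Finset.self_mem_range_succ i) h0
          rw [hz, mul_zero] at hQ
          exact lt_irrefl 0 hQ
        by_contra hne
        exact hfac (qtrans_other (hω (i + 1) (by omega)) hne)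
      have hgrow : ∀ s : ℕ, ω (m + s) = ω m + s := by
        intro s
        induction s with
        | zero => simp
        | succ s ih =>
          rw [show m + (s + 1) = (m + s) + 1 by omega, hstep (m + s) (by omega), ih]
          omega
      refine Set.mem_iUnion.2 ⟨fun i : Fin (m + 1) => ω i, ?_⟩
      have heq : ascSeq m (fun i : Fin (m + 1) => ω i) = ω := by
        funext i
        by_cases hi : i < m + 1
        · rw [ascSeq, dif_pos hi]
        · rw [ascSeq, dif_neg hi]
          have h2 : ω i = ω (m + (i - m)) := by congr 1; omega
          rw [h2, hgrow (i - m)]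
      exact Set.mem_singleton_iff.2 heq.symm
    have hle0 : Pm {ω : ℕ → ℕ | ∀ j, m ≤ j → ω j ≠ 0} ≤ 0 :=
      calc Pm {ω : ℕ → ℕ | ∀ j, m ≤ j → ω j ≠ 0}
          ≤ Pm (N0 ∪ ⋃ π : Fin (m + 1) → ℕ, {ascSeq m π}) := measure_mono hsubBm
        _ ≤ Pm N0 + Pm (⋃ π : Fin (m + 1) → ℕ, {ascSeq m π}) := measure_union_le _ _
        _ = 0 := by rw [hN0, measure_iUnion_null_iff.2 hsing, add_zero]
    exact le_antisymm hle0 zero_le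
  -- conclusion
  have hTk : ∀ k : ℕ, Pm {ω | ∀ n, x ∈ itf a b F ω n '' Set.univ} ≤ ρ ^ k := by
    intro k
    have hsub : {ω : ℕ → ℕ | ∀ n, x ∈ itf a b F ω n '' Set.univ} ⊆
        Vset a b F L x k ∪ ⋃ m : ℕ, {ω : ℕ → ℕ | ∀ j, m ≤ j → ω j ≠ 0} := by
      intro ω hω
      by_cases hz : ∀ m', ∃ j, m' ≤ j ∧ ω j = 0
      · left
        obtain ⟨j, hj⟩ := RTim_exists hz k
        exact ⟨j, hj, hω _⟩
      · right
        push_neg at hz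
        obtain ⟨m', hm'⟩ := hz
        exact Set.mem_iUnion.2 ⟨m', fun j hj => hm' j hj⟩
    calc Pm {ω | ∀ n, x ∈ itf a b F ω n '' Set.univ}
        ≤ Pm (Vset a b F L x k) + Pm (⋃ m : ℕ, {ω : ℕ → ℕ | ∀ j, m ≤ j → ω j ≠ 0}) :=
          (measure_mono hsub).trans (measure_union_le _ _)
      _ = Pm (Vset a b F L x k) := by rw [measure_iUnion_null_iff.2 hBadm, add_zero]
      _ ≤ ρ ^ k := hbound k
  have hρlt : ρ < 1 := by
    rw [hρdef]
    exact ENNReal.ofReal_lt_one.2 (by linarith)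
  have htend := ENNReal.tendsto_pow_atTop_nhds_zero_of_lt_one hρlt
  exact le_antisymm (ge_of_tendsto' htend hTk) zero_le

end MainPart3
-- ============ Part IX : from the splitting condition to blocks ============

section SplitPart

variable {a b : ℝ} {F : ℕ → Set.Icc a b → Set.Icc a b} {p : ℕ → ℝ} {E : ℝ}

lemma cylProbP_Ptrans_pos (hp : ∀ n, 0 ≤ p n) {c : ℕ → ℕ} {l : ℕ}
    (hpos : 0 < cylProbP p E c l) :
    ∀ j, j < l - 1 → 0 < Ptrans p (c j) (c (j + 1)) := by
  intro j hj
  have h1 : (∏ i ∈ Finset.range (l - 1), Ptrans p (c i) (c (i + 1))) ≠ 0 := by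
    intro h0
    rw [cylProbP, h0, mul_zero] at hpos
    exact lt_irrefl 0 hpos
  have h2 := Finset.prod_ne_zero_iff.1 h1 j (Finset.mem_range.2 hj)
  exact lt_of_le_of_ne (Ptrans_nonneg hp _ _) (Ne.symm h2)

lemma wordExt_comp (c : ℕ → ℕ) (l s : ℕ) :
    itfRev a b F (wordExt c l s) (l + s) =
      (itfRev a b F (fun i => s - 1 - i) s) ∘ (itfRev a b F c l) := by
  funext x
  rw [show itfRev a b F (wordExt c l s) (l + s) x
      = itfRev a b F (fun i => wordExt c l s (l + i)) s (itfRev a b F (wordExt c l s) l x)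
      from itfRev_add _ l s x]
  rw [show itfRev a b F (wordExt c l s) l x = itfRev a b F c l x
      from congrFun (itfRev_congr (fun i hi => wordExt_congr c l s i hi)) x]
  rw [show itfRev a b F (fun i => wordExt c l s (l + i)) s
        = itfRev a b F (fun i => s - 1 - i) s
      from itfRev_congr (fun i hi => by rw [wordExt, if_neg (by omega)]; omega)]
  rfl

lemma wordExt_disjoint (hFinj : ∀ k, Function.Injective (F k)) {c d : ℕ → ℕ} {l r s : ℕ}
    (hdisj : (itfRev a b F c l '' Set.univ) ∩ (itfRev a b F d r '' Set.univ) = ∅) :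
    (itfRev a b F (wordExt c l s) (l + s) '' Set.univ) ∩
      (itfRev a b F (wordExt d r s) (r + s) '' Set.univ) = ∅ := by
  rw [wordExt_comp c l s, wordExt_comp d r s, Set.image_comp, Set.image_comp,
    ← Set.image_inter (itfRev_injective hFinj (fun i => s - 1 - i) s), hdisj, Set.image_empty]

end SplitPart

/-- Theorem 3: if f and g are injective and the splitting condition is
satisfied, then ℙ⁻(S) = 1. -/
theorem stmt4 (a b : ℝ) (hab : a < b)
    (f g : Set.Icc a b → Set.Icc a b) (hfc : Continuous f) (hgc : Continuous g)
    (hfi : Function.Injective f) (hgi : Function.Injective g)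
    (p : ℕ → ℝ) (E : ℝ)
    (hp : ∀ n, 0 ≤ p n) (hp1 : HasSum p 1) (hp0 : 0 < p 0)
    (hmean : Summable fun n : ℕ => (n : ℝ) * p n)
    (hE : E = ∑' n : ℕ, (n : ℝ) * p n)
    (hsupp : ∀ N : ℕ, ∃ n, N ≤ n ∧ 0 < p n)
    (Pm : Measure (ℕ → ℕ)) [IsProbabilityMeasure Pm]
    (hPm : ∀ n, 1 ≤ n → ∀ ξ : ℕ → ℕ, Pm (cyl ξ n) = ENNReal.ofReal (cylProbQ p E ξ n))
    (Pp : Measure (ℕ → ℕ)) [IsProbabilityMeasure Pp]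
    (hPp : ∀ n, 1 ≤ n → ∀ ξ : ℕ → ℕ, Pp (cyl ξ n) = ENNReal.ofReal (cylProbP p E ξ n))
    (hsplit : Splitting a b (fseq a b g f) Pp) :
    Pm (Sset a b (fseq a b g f)) = 1 := by
  classical
  obtain ⟨l, r, c, d, hl, hr, hPc, hPd, hcd, hIdisj⟩ := hsplit
  have hFinj : ∀ k, Function.Injective (fseq a b g f k) := fseq_injective hfi hgi
  have hFcont : ∀ k, Continuous (fseq a b g f k) := fseq_continuous hfc hgc
  set s := c (l - 1) with hs
  have hds : d (r - 1) = s := hcd.symm.trans hs.symm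
  -- positivity of the transitions along the two splitting words
  have hQc : 0 < cylProbP p E c l := by
    rw [hPp l hl c] at hPc
    exact ENNReal.ofReal_pos.1 hPc
  have hQd : 0 < cylProbP p E d r := by
    rw [hPp r hr d] at hPd
    exact ENNReal.ofReal_pos.1 hPd
  have hcsP : ∀ j, j < l + s - 1 →
      0 < Ptrans p (wordExt c l s j) (wordExt c l s (j + 1)) :=
    wordExt_Ptrans_pos hl hs.symm (cylProbP_Ptrans_pos hp hQc)
  have hdsP : ∀ j, j < r + s - 1 →
      0 < Ptrans p (wordExt d r s j) (wordExt d r s (j + 1)) :=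
    wordExt_Ptrans_pos hr hds (cylProbP_Ptrans_pos hp hQd)
  have hcs0 : wordExt c l s (l + s - 1) = 0 := wordExt_last hl hs.symm
  have hds0 : wordExt d r s (r + s - 1) = 0 := wordExt_last hr hds
  have hdisjE := wordExt_disjoint (s := s) hFinj hIdisj
  -- all point-survival sets are null
  have hTnull : ∀ x : Set.Icc a b,
      Pm {ω | ∀ n, x ∈ itf a b (fseq a b g f) ω n '' Set.univ} = 0 := fun x =>
    T_null (fseq a b g f) hFinj p E hp hp1 hsupp hE Pm hPm (l + s) (r + s)
      (by omega) (by omega) (wordExt c l s) (wordExt d r s) hcs0 hds0 hcsP hdsP hdisjE x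
  have hUnull : Pm (⋃ q : ℚ,
      {ω | ∀ n, Set.projIcc a b hab.le q ∈ itf a b (fseq a b g f) ω n '' Set.univ}) = 0 :=
    measure_iUnion_null_iff.2 fun q => hTnull _
  -- the complement of S is contained in the union of the survival sets
  haveI : PreconnectedSpace ↥(Set.Icc a b) :=
    Subtype.preconnectedSpace (isPreconnected_Icc (a := a) (b := b))
  have hsubS : ∀ ω : ℕ → ℕ,
      ω ∉ (⋃ q : ℚ,
        {ω | ∀ n, Set.projIcc a b hab.le q ∈ itf a b (fseq a b g f) ω n '' Set.univ}) →
      ω ∈ Sset a b (fseq a b g f) := by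
    intro ω hω
    by_contra hdiam
    have hnsub : ¬ (Iset a b (fseq a b g f) ω).Subsingleton := by
      intro hsub
      exact hdiam (EMetric.diam_eq_zero_iff.2 hsub)
    rw [Set.not_subsingleton_iff] at hnsub
    obtain ⟨y, hy, z, hz, hyz⟩ := hnsub
    -- a helper, applied to the two possible orders
    have key : ∀ y z : Set.Icc a b, y ∈ Iset a b (fseq a b g f) ω →
        z ∈ Iset a b (fseq a b g f) ω → (y : ℝ) < (z : ℝ) → False := by
      intro y z hy hz hyltz
      obtain ⟨q, hq1, hq2⟩ := exists_rat_btwn hyltz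
      have hqmem : (q : ℝ) ∈ Set.Icc a b := ⟨le_trans y.2.1 hq1.le, le_trans hq2.le z.2.2⟩
      have hxq : ((Set.projIcc a b hab.le q : Set.Icc a b) : ℝ) = (q : ℝ) := by
        rw [Set.projIcc_of_mem hab.le hqmem]
      apply hω
      refine Set.mem_iUnion.2 ⟨q, ?_⟩
      intro n
      cases n with
      | zero => exact ⟨Set.projIcc a b hab.le q, trivial, rfl⟩
      | succ n =>
        have hyJ : y ∈ itf a b (fseq a b g f) ω (n + 1) '' Set.univ :=
          Set.mem_iInter.1 hy n
        have hzJ : z ∈ itf a b (fseq a b g f) ω (n + 1) '' Set.univ :=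
          Set.mem_iInter.1 hz n
        have hpc : IsPreconnected ((fun t : Set.Icc a b => (t : ℝ)) ''
            (itf a b (fseq a b g f) ω (n + 1) '' Set.univ)) := by
          apply IsPreconnected.image
          · exact isPreconnected_univ.image _
              (itf_continuous hFcont ω (n + 1)).continuousOn
          · exact continuous_subtype_val.continuousOn
        have hoc := hpc.ordConnected
        have hqK : (q : ℝ) ∈ (fun t : Set.Icc a b => (t : ℝ)) ''
            (itf a b (fseq a b g f) ω (n + 1) '' Set.univ) :=
          hoc.out ⟨y, hyJ, rfl⟩ ⟨z, hzJ, rfl⟩ ⟨hq1.le, hq2.le⟩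
        obtain ⟨x', hx', hx'q⟩ := hqK
        have hxx : Set.projIcc a b hab.le q = x' := Subtype.ext (by rw [hxq, ← hx'q])
        rw [hxx]
        exact hx'
    rcases lt_trichotomy (y : ℝ) (z : ℝ) with h | h | h
    · exact key y z hy hz h
    · exact hyz (Subtype.ext h)
    · exact key z y hz hy h
  -- conclusion
  have hone : (1 : ENNReal) ≤ Pm (Sset a b (fseq a b g f)) := by
    calc (1 : ENNReal) = Pm Set.univ := measure_univ.symm
      _ ≤ Pm (Sset a b (fseq a b g f) ∪ ⋃ q : ℚ,
            {ω | ∀ n, Set.projIcc a b hab.le q ∈ itf a b (fseq a b g f) ω n '' Set.univ}) := by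
          apply measure_mono
          intro ω _
          by_cases hmem : ω ∈ ⋃ q : ℚ,
            {ω | ∀ n, Set.projIcc a b hab.le q ∈ itf a b (fseq a b g f) ω n '' Set.univ}
          · exact Or.inr hmem
          · exact Or.inl (hsubS ω hmem)
      _ ≤ Pm (Sset a b (fseq a b g f)) + Pm (⋃ q : ℚ,
            {ω | ∀ n, Set.projIcc a b hab.le q ∈ itf a b (fseq a b g f) ω n '' Set.univ}) :=
          measure_union_le _ _
      _ = Pm (Sset a b (fseq a b g f)) := by rw [hUnull, add_zero]
  exact le_antisymm prob_le_one hone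

end
end

section
/- Lemma 3: For every continuous bounded function ĥ : M̂ → ℝ, every probability measure μ̂ on (M̂, Ŝ), and every ε > 0, there exist integers N and M such that |∑_{j≥M} ∫_{[j]} (h_j∘π) dℙ⁻| < ε and |∑_{j≥M} ∫_I h_j d(Tⁿμ̂)_j| < ε for all n ≥ N, where h_j(x) := ĥ(j,x) and [j] := {ω ∈ Σ : ω₀ = j}. -/
open MeasureTheory Filter Topology Set
open scoped BigOperators

noncomputable section

open scoped ENNReal

lemma sliceM_univ_eq {a b : ℝ} (μ' : Measure (ℕ × Set.Icc a b)) (k : ℕ) :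
    sliceM a b μ' k Set.univ = μ' ({k} ×ˢ (Set.univ : Set (Set.Icc a b))) := by
  rw [sliceM, Measure.map_apply measurable_snd MeasurableSet.univ, Set.preimage_univ,
    Measure.restrict_apply_univ]

lemma tsum_prod_univ_eq {a b : ℝ} (μ' : Measure (ℕ × Set.Icc a b)) :
    ∑' k : ℕ, μ' ({k} ×ˢ (Set.univ : Set (Set.Icc a b))) = μ' Set.univ := by
  rw [← measure_iUnion ?_ fun k => (measurableSet_singleton k).prod MeasurableSet.univ]
  · congr 1
    ext ⟨k, x⟩
    simp
  · intro i j hij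
    simp only [Function.onFun, Set.disjoint_left]
    rintro ⟨k, x⟩ hk hk'
    simp only [Set.mem_prod, Set.mem_singleton_iff] at hk hk'
    exact hij (hk.1.symm.trans hk'.1)

lemma TOp_prod_apply {a b : ℝ} (p : ℕ → ℝ) (fI : ℕ → Set.Icc a b → Set.Icc a b)
    (hfI : ∀ k, Measurable (fI k)) (μ' : Measure (ℕ × Set.Icc a b)) (k : ℕ) :
    TOp a b p fI μ' ({k} ×ˢ (Set.univ : Set (Set.Icc a b)))
      = μ' ({k + 1} ×ˢ (Set.univ : Set (Set.Icc a b)))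
        + ENNReal.ofReal (p k) * μ' ({0} ×ˢ (Set.univ : Set (Set.Icc a b))) := by
  have hA : MeasurableSet ({k} ×ˢ (Set.univ : Set (Set.Icc a b))) :=
    (measurableSet_singleton k).prod MeasurableSet.univ
  rw [TOp, Measure.sum_apply _ hA]
  rw [tsum_eq_single k ?_]
  · rw [Measure.map_apply (measurable_const.prodMk (hfI k)) hA]
    have hpre : (fun x => (k, fI k x)) ⁻¹' ({k} ×ˢ (Set.univ : Set (Set.Icc a b)))
        = Set.univ := by
      ext x; simp
    rw [hpre, Measure.add_apply, Measure.smul_apply, smul_eq_mul,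
      sliceM_univ_eq, sliceM_univ_eq]
  · intro j hj
    rw [Measure.map_apply (measurable_const.prodMk (hfI j)) hA]
    have hpre : (fun x => (j, fI j x)) ⁻¹' ({k} ×ˢ (Set.univ : Set (Set.Icc a b)))
        = (∅ : Set (Set.Icc a b)) := by
      ext x; simp [Ne.symm hj, hj]
    rw [hpre]
    simp

/-- Lemma 3: the tails (over j ≥ M) of both sums are uniformly small for
n large. -/
theorem stmt6 (a b : ℝ) (hab : a < b)
    (f g : Set.Icc a b → Set.Icc a b) (hfc : Continuous f) (hgc : Continuous g)
    (p : ℕ → ℝ) (E : ℝ)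
    (hp : ∀ n, 0 ≤ p n) (hp1 : HasSum p 1) (hp0 : 0 < p 0)
    (hmean : Summable fun n : ℕ => (n : ℝ) * p n)
    (hE : E = ∑' n : ℕ, (n : ℝ) * p n)
    (hsupp : ∀ N : ℕ, ∃ n, N ≤ n ∧ 0 < p n)
    (Pm : Measure (ℕ → ℕ)) [IsProbabilityMeasure Pm]
    (hPm : ∀ n, 1 ≤ n → ∀ ξ : ℕ → ℕ, Pm (cyl ξ n) = ENNReal.ofReal (cylProbQ p E ξ n))
    (πm : (ℕ → ℕ) → Set.Icc a b) (hπmeas : Measurable πm)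
    (hπ : ∀ ξ ∈ Sset a b (fseq a b g f), ∀ x : Set.Icc a b,
      Tendsto (fun n => itf a b (fseq a b g f) ξ (n + 1) x) atTop (𝓝 (πm ξ)))
    (h : ℕ × Set.Icc a b → ℝ) (hhc : Continuous h) (hhb : ∃ C, ∀ z, |h z| ≤ C)
    (μ : Measure (ℕ × Set.Icc a b)) [IsProbabilityMeasure μ]
    (ε : ℝ) (hε : 0 < ε) :
    ∃ N M : ℕ,
      |∑' j : ℕ, ∫ ω in {ω : ℕ → ℕ | ω 0 = M + j}, h (M + j, πm ω) ∂Pm| < ε ∧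
      ∀ n, N ≤ n →
        |∑' j : ℕ, ∫ x, h (M + j, x)
            ∂(sliceM a b ((TOp a b p (fseq a b g f))^[n] μ) (M + j))| < ε := by
  classical
  obtain ⟨C, hC⟩ := hhb
  have hC0 : 0 ≤ C := le_trans (abs_nonneg _) (hC (0, ⟨a, le_refl a, hab.le⟩))
  set δ : ℝ := ε / (C + 1) with hδdef
  have hδpos : 0 < δ := div_pos hε (by linarith)
  have hCδ : C * δ < ε := by
    have h1 : (C + 1) * δ = ε := by
      rw [hδdef]; field_simp
    nlinarith
  set fI : ℕ → Set.Icc a b → Set.Icc a b := fseq a b g f with hfIdef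
  have hfImeas : ∀ k, Measurable (fI k) := by
    intro k
    rw [hfIdef]
    unfold fseq
    split
    · exact hgc.measurable
    · exact hfc.measurable
  set ν : ℕ → Measure (ℕ × Set.Icc a b) := fun n => (TOp a b p fI)^[n] μ with hνdef
  set s : ℕ → ℕ → ℝ≥0∞ :=
    fun n k => ν n ({k} ×ˢ (Set.univ : Set (Set.Icc a b))) with hsdef
  have hq1 : ∑' k : ℕ, ENNReal.ofReal (p k) = 1 := by
    rw [← ENNReal.ofReal_one, ← hp1.tsum_eq]
    exact (ENNReal.ofReal_tsum_of_nonneg hp hp1.summable).symm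
  have hνsucc : ∀ n, ν (n + 1) = TOp a b p fI (ν n) := by
    intro n
    simp only [hνdef]
    exact Function.iterate_succ_apply' _ _ _
  have hsrec : ∀ n k, s (n + 1) k = s n (k + 1) + ENNReal.ofReal (p k) * s n 0 := by
    intro n k
    simp only [hsdef, hνsucc n]
    exact TOp_prod_apply p fI hfImeas (ν n) k
  have hmass : ∀ n, ν n Set.univ = 1 := by
    intro n
    induction n with
    | zero => simp [hνdef]
    | succ n ih =>
      calc ν (n + 1) Set.univ = ∑' k, s (n + 1) k := (tsum_prod_univ_eq _).symm
        _ = ∑' k, (s n (k + 1) + ENNReal.ofReal (p k) * s n 0) :=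
            tsum_congr fun k => hsrec n k
        _ = (∑' k, s n (k + 1)) + (∑' k : ℕ, ENNReal.ofReal (p k) * s n 0) :=
            ENNReal.tsum_add
        _ = (∑' k, s n (k + 1)) + s n 0 := by
            rw [ENNReal.tsum_mul_right, hq1, one_mul]
        _ = s n 0 + ∑' k, s n (k + 1) := add_comm _ _
        _ = ∑' k, s n k := (tsum_eq_zero_add' ENNReal.summable).symm
        _ = ν n Set.univ := tsum_prod_univ_eq _
        _ = 1 := ih
  have hsle1 : ∀ n k, s n k ≤ 1 := by
    intro n k
    calc s n k ≤ ν n Set.univ := measure_mono (Set.subset_univ _)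
      _ = 1 := hmass n
  have hsne : ∀ n k, s n k ≠ ∞ := fun n k => ne_top_of_le_ne_top ENNReal.one_ne_top (hsle1 n k)
  -- the tail sums
  set q : ℕ → ℝ≥0∞ := fun k => ENNReal.ofReal (p k) with hqdef
  set t : ℕ → ℝ≥0∞ := fun k => ∑' j, q (k + j) with htdef
  have htfin : ∑' k, t k ≠ ∞ := by
    set e : ℕ → ℕ → ℝ≥0∞ := fun k n => if k ≤ n then q n else 0 with hedef
    have h1 : ∀ k, t k ≤ ∑' n, e k n := by
      intro k
      have : ∀ j, q (k + j) = e k (k + j) := by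
        intro j; simp [hedef]
      rw [htdef]
      simp only []
      calc ∑' j, q (k + j) = ∑' j, e k (k + j) := tsum_congr this
        _ ≤ ∑' n, e k n :=
            ENNReal.tsum_comp_le_tsum_of_injective (fun x y hxy => by omega) (e k)
    have h2 : ∑' k, ∑' n, e k n = ∑' n : ℕ, ((n : ℝ≥0∞) + 1) * q n := by
      rw [ENNReal.tsum_comm]
      refine tsum_congr fun n => ?_
      rw [tsum_eq_sum (s := Finset.range (n + 1)) ?_]
      · have : ∀ k ∈ Finset.range (n + 1), e k n = q n := by
          intro k hk
          simp only [Finset.mem_range] at hk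
          simp [hedef, Nat.lt_succ_iff.mp hk]
        rw [Finset.sum_congr rfl this, Finset.sum_const, Finset.card_range,
          nsmul_eq_mul]
        push_cast
        ring
      · intro k hk
        simp only [Finset.mem_range, not_lt] at hk
        simp [hedef, Nat.lt_of_succ_le hk, not_le_of_gt]
    have h3 : ∑' n : ℕ, ((n : ℝ≥0∞) + 1) * q n
        = ENNReal.ofReal (∑' n : ℕ, ((n : ℝ) + 1) * p n) := by
      rw [ENNReal.ofReal_tsum_of_nonneg
        (fun n => mul_nonneg (by positivity) (hp n))
        (by
          refine ((hmean.add hp1.summable).congr fun n => ?_)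
          ring)]
      refine tsum_congr fun n => ?_
      rw [ENNReal.ofReal_mul (by positivity), hqdef]
      congr 1
      rw [ENNReal.ofReal_add (by positivity) zero_le_one]
      simp [ENNReal.ofReal_natCast]
    refine ne_top_of_le_ne_top ?_ (le_trans (ENNReal.tsum_le_tsum h1) (le_of_eq h2))
    rw [h3]
    exact ENNReal.ofReal_ne_top
  set A : ℕ → ℕ → ℝ≥0∞ := fun n M => ∑' j, s n (M + j) with hAdef
  have hArec : ∀ n M, A (n + 1) M ≤ A n (M + 1) + t M := by
    intro n M
    have e1 : A (n + 1) M = (∑' j, s n (M + j + 1)) + (∑' j, q (M + j)) * s n 0 := by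
      rw [hAdef]
      simp only []
      rw [tsum_congr fun j => hsrec n (M + j), ENNReal.tsum_add, ENNReal.tsum_mul_right]
    rw [e1]
    have e2 : (∑' j, s n (M + j + 1)) = A n (M + 1) := by
      refine tsum_congr fun j => ?_
      congr 1
      omega
    rw [e2]
    refine add_le_add_right ?_ _
    calc (∑' j, q (M + j)) * s n 0 ≤ t M * 1 := by
          refine mul_le_mul' (le_of_eq ?_) (hsle1 n 0)
          rw [htdef]
      _ = t M := mul_one _
  have hAbound : ∀ n M, A n M ≤ A 0 (M + n) + ∑ i ∈ Finset.range n, t (M + i) := by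
    intro n
    induction n with
    | zero => intro M; simp
    | succ n ih =>
      intro M
      calc A (n + 1) M ≤ A n (M + 1) + t M := hArec n M
        _ ≤ (A 0 (M + 1 + n) + ∑ i ∈ Finset.range n, t (M + 1 + i)) + t M :=
            add_le_add_left (ih (M + 1)) _
        _ = A 0 (M + (n + 1)) + ∑ i ∈ Finset.range (n + 1), t (M + i) := by
            rw [Finset.sum_range_succ' (fun i => t (M + i)) n]
            have e1 : M + 1 + n = M + (n + 1) := by omega
            have e2 : ∀ i, M + 1 + i = M + (i + 1) := fun i => by omega
            simp only [e1, e2, Nat.add_zero]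
            abel
  have hAmono : ∀ n M, A 0 (M + n) ≤ A 0 M := by
    intro n M
    rw [hAdef]
    simp only []
    calc ∑' j, s 0 (M + n + j) = ∑' j, s 0 (M + (n + j)) := by
          refine tsum_congr fun j => ?_
          congr 1
          omega
      _ ≤ ∑' j, s 0 (M + j) :=
          ENNReal.tsum_comp_le_tsum_of_injective
            (f := fun j : ℕ => n + j) (add_right_injective n) (fun j => s 0 (M + j))
  have hAunif : ∀ n M, A n M ≤ A 0 M + ∑' i, t (M + i) := by
    intro n M
    calc A n M ≤ A 0 (M + n) + ∑ i ∈ Finset.range n, t (M + i) := hAbound n M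
      _ ≤ A 0 M + ∑' i, t (M + i) :=
          add_le_add (hAmono n M) (ENNReal.sum_le_tsum _)
  -- tendsto of the three tails
  have hA00 : ∑' k, s 0 k ≠ ∞ := by
    rw [hsdef]
    simp only []
    rw [tsum_prod_univ_eq, hmass 0]
    exact ENNReal.one_ne_top
  have hT1 : Tendsto (fun M => A 0 M + ∑' i, t (M + i)) atTop (𝓝 0) := by
    have t1 : Tendsto (fun M => A 0 M) atTop (𝓝 0) := by
      have := ENNReal.tendsto_sum_nat_add (s 0) hA00
      refine this.congr fun M => ?_
      exact tsum_congr fun k => by rw [Nat.add_comm]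
    have t2 : Tendsto (fun M => ∑' i, t (M + i)) atTop (𝓝 0) := by
      have := ENNReal.tendsto_sum_nat_add t htfin
      refine this.congr fun M => ?_
      exact tsum_congr fun k => by rw [Nat.add_comm]
    simpa using t1.add t2
  set bb : ℕ → ℝ≥0∞ := fun k => Pm {ω : ℕ → ℕ | ω 0 = k} with hbbdef
  have hbbmeas : ∀ k : ℕ, MeasurableSet {ω : ℕ → ℕ | ω 0 = k} := by
    intro k
    show MeasurableSet ((fun ω : ℕ → ℕ => ω 0) ⁻¹' {k})
    exact measurableSet_preimage (measurable_pi_apply 0) (measurableSet_singleton k)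
  have hbb1 : ∑' k, bb k = 1 := by
    rw [hbbdef]
    simp only []
    rw [← measure_iUnion ?_ hbbmeas]
    · have : ⋃ k : ℕ, {ω : ℕ → ℕ | ω 0 = k} = Set.univ := by
        ext ω; simp
      rw [this]
      exact measure_univ
    · intro i j hij
      simp only [Function.onFun, Set.disjoint_left]
      intro ω hi hj
      exact hij (hi.symm.trans hj)
  have hT2 : Tendsto (fun M => ∑' j, bb (M + j)) atTop (𝓝 0) := by
    have := ENNReal.tendsto_sum_nat_add bb (by rw [hbb1]; exact ENNReal.one_ne_top)
    refine this.congr fun M => ?_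
    exact tsum_congr fun k => by rw [Nat.add_comm]
  have hδ0 : (0 : ℝ≥0∞) < ENNReal.ofReal δ := ENNReal.ofReal_pos.mpr hδpos
  obtain ⟨M, hM1, hM2⟩ :=
    ((hT1.eventually_lt_const hδ0).and (hT2.eventually_lt_const hδ0)).exists
  -- a generic estimate
  have key : ∀ (F : ℕ → ℝ) (r : ℕ → ℝ≥0∞), (∀ j, r j ≠ ∞) →
      (∀ j, |F j| ≤ C * (r j).toReal) → (∑' j, r j) < ENNReal.ofReal δ →
      |∑' j, F j| < ε := by
    intro F r hrne hFr hrδ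
    have hrfin : ∑' j, r j ≠ ∞ := hrδ.ne_top
    have hrto : Summable fun j => (r j).toReal := ENNReal.summable_toReal hrfin
    have hrsum : Summable fun j => C * (r j).toReal := hrto.mul_left C
    have hFnorm : Summable fun j => ‖F j‖ := by
      refine Summable.of_nonneg_of_le (fun j => norm_nonneg _)
        (fun j => ?_) hrsum
      simpa [Real.norm_eq_abs] using hFr j
    have h1 : |∑' j, F j| ≤ ∑' j, ‖F j‖ := by
      rw [← Real.norm_eq_abs]
      exact norm_tsum_le_tsum_norm hFnorm
    have h2 : ∑' j, ‖F j‖ ≤ ∑' j, C * (r j).toReal := by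
      refine Summable.tsum_le_tsum (fun j => ?_) hFnorm hrsum
      simpa [Real.norm_eq_abs] using hFr j
    have h3 : ∑' j, C * (r j).toReal = C * (∑' j, r j).toReal := by
      rw [tsum_mul_left, ENNReal.tsum_toReal_eq hrne]
    have h4 : (∑' j, r j).toReal < δ := ENNReal.toReal_lt_of_lt_ofReal hrδ
    calc |∑' j, F j| ≤ C * (∑' j, r j).toReal := by
          rw [← h3]; exact h1.trans h2
      _ ≤ C * δ := mul_le_mul_of_nonneg_left h4.le hC0
      _ < ε := hCδ
  refine ⟨0, M, ?_, ?_⟩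
  · refine key _ (fun j => bb (M + j)) (fun j => measure_ne_top _ _) (fun j => ?_) hM2
    have hb : ∀ᵐ ω ∂(Pm.restrict {ω : ℕ → ℕ | ω 0 = M + j}),
        ‖h (M + j, πm ω)‖ ≤ C :=
      Filter.Eventually.of_forall fun ω => by
        simpa [Real.norm_eq_abs] using hC (M + j, πm ω)
    have := norm_integral_le_of_norm_le_const hb
    rw [measureReal_def, Measure.restrict_apply_univ] at this
    simpa [Real.norm_eq_abs, hbbdef] using this
  · intro n _
    refine key _ (fun j => s n (M + j)) (fun j => hsne n _) (fun j => ?_)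
      (lt_of_le_of_lt (hAunif n M) hM1)
    have hfin : IsFiniteMeasure (sliceM a b (ν n) (M + j)) := by
      constructor
      rw [sliceM_univ_eq]
      exact lt_of_le_of_lt (hsle1 n (M + j)) (by norm_num)
    have hb : ∀ᵐ x ∂(sliceM a b (ν n) (M + j)), ‖h (M + j, x)‖ ≤ C :=
      Filter.Eventually.of_forall fun x => by
        simpa [Real.norm_eq_abs] using hC (M + j, x)
    have hint := @norm_integral_le_of_norm_le_const _ _ _ _ _
      (sliceM a b (ν n) (M + j)) hfin _ _ hb
    rw [measureReal_def, sliceM_univ_eq] at hint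
    have hν' : sliceM a b ((TOp a b p (fseq a b g f))^[n] μ) (M + j)
        = sliceM a b (ν n) (M + j) := by rw [hνdef, hfIdef]
    rw [hν']
    simpa [Real.norm_eq_abs, hsdef] using hint

end
end

section
/- If g is Lipschitz with constant L₀ > 0 and f is Lipschitz with constant L₁ > 0 (so f_i has Lipschitz constant L_i with L_i = L₁ for i ≥ 1), and ξ ∈ Σ satisfies lim sup_{n→∞} (1/n)·∑_{k=0}^{n-1} log L_{ξ_k} < 0, then diam(I_ξ) = 0, i.e. ξ ∈ S. -/
open MeasureTheory Filter Topology Set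
open scoped BigOperators

noncomputable section

/-- if limsup (1/n)·∑_{k<n} log L_{ξ_k} < 0, then diam(I_ξ) = 0,
i.e. ξ ∈ S. -/
theorem stmt10 (a b : ℝ) (hab : a < b)
    (f g : Set.Icc a b → Set.Icc a b) (hfc : Continuous f) (hgc : Continuous g)
    (L0 L1 : ℝ) (hL0 : 0 < L0) (hL1 : 0 < L1)
    (hgL : ∀ x y : Set.Icc a b, dist (g x) (g y) ≤ L0 * dist x y)
    (hfL : ∀ x y : Set.Icc a b, dist (f x) (f y) ≤ L1 * dist x y)
    (ξ : ℕ → ℕ)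
    (hlim : Filter.limsup
        (fun n : ℕ => (1 / (n : ℝ)) *
          ∑ k ∈ Finset.range n, Real.log (if ξ k = 0 then L0 else L1)) atTop < 0) :
    EMetric.diam (Iset a b (fseq a b g f) ξ) = 0 := by
  set fI := fseq a b g f with hfI
  set L : ℕ → ℝ := fun k => if ξ k = 0 then L0 else L1 with hLdef
  have hLpos : ∀ k, 0 < L k := fun k => by
    by_cases h : ξ k = 0 <;> simp [hLdef, h, hL0, hL1]
  -- Lipschitz bound for single maps
  have hstep : ∀ k (x y : Set.Icc a b), dist (fI k x) (fI k y) ≤ (if k = 0 then L0 else L1) * dist x y := by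
    intro k x y
    by_cases h : k = 0 <;> simp [hfI, fseq, h, hgL, hfL]
  -- product Lipschitz bound for iterates
  have hlip : ∀ n (x y : Set.Icc a b),
      dist (itf a b fI ξ n x) (itf a b fI ξ n y) ≤ (∏ k ∈ Finset.range n, L k) * dist x y := by
    intro n
    induction n with
    | zero => intro x y; simp [itf]
    | succ n ih =>
      intro x y
      have h1 := ih (fI (ξ n) x) (fI (ξ n) y)
      have h2 := hstep (ξ n) x y
      have hP : 0 ≤ ∏ k ∈ Finset.range n, L k :=
        Finset.prod_nonneg fun k _ => (hLpos k).le
      calc dist (itf a b fI ξ (n+1) x) (itf a b fI ξ (n+1) y)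
          = dist (itf a b fI ξ n (fI (ξ n) x)) (itf a b fI ξ n (fI (ξ n) y)) := rfl
        _ ≤ (∏ k ∈ Finset.range n, L k) * dist (fI (ξ n) x) (fI (ξ n) y) := h1
        _ ≤ (∏ k ∈ Finset.range n, L k) * ((if ξ n = 0 then L0 else L1) * dist x y) :=
            mul_le_mul_of_nonneg_left h2 hP
        _ = (∏ k ∈ Finset.range (n+1), L k) * dist x y := by
            rw [Finset.prod_range_succ]; ring
  -- diam bound
  have hdiam : ∀ n, EMetric.diam (Iset a b fI ξ) ≤
      ENNReal.ofReal ((∏ k ∈ Finset.range (n+1), L k) * (b - a)) := by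
    intro n
    apply EMetric.diam_le
    intro x hx y hy
    have hx' : x ∈ itf a b fI ξ (n+1) '' Set.univ := by
      have := Set.mem_iInter.mp hx n; exact this
    have hy' : y ∈ itf a b fI ξ (n+1) '' Set.univ := by
      have := Set.mem_iInter.mp hy n; exact this
    obtain ⟨u, -, rfl⟩ := hx'
    obtain ⟨v, -, rfl⟩ := hy'
    rw [edist_dist]
    apply ENNReal.ofReal_le_ofReal
    refine (hlip (n+1) u v).trans ?_
    apply mul_le_mul_of_nonneg_left _ (Finset.prod_nonneg fun k _ => (hLpos k).le)
    have : dist (u : ℝ) (v : ℝ) ≤ b - a :=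
      Real.dist_le_of_mem_Icc u.2 v.2
    simpa [Subtype.dist_eq] using this
  -- extract eventual bound from limsup
  set u : ℕ → ℝ := fun n => (1 / (n : ℝ)) * ∑ k ∈ Finset.range n, Real.log (L k) with hudef
  have hbdd : IsBoundedUnder (· ≤ ·) atTop u := by
    refine ⟨max 0 (max |Real.log L0| |Real.log L1|), Filter.eventually_map.mpr (Filter.Eventually.of_forall fun (n : ℕ) => ?_)⟩
    rcases Nat.eq_zero_or_pos n with hn | hn
    · simp [hudef, hn]
    · have hsum : ∑ k ∈ Finset.range n, Real.log (L k)
          ≤ (n : ℝ) * max |Real.log L0| |Real.log L1| := by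
        calc ∑ k ∈ Finset.range n, Real.log (L k)
            ≤ ∑ _k ∈ Finset.range n, max |Real.log L0| |Real.log L1| := by
              apply Finset.sum_le_sum
              intro k _
              by_cases h : ξ k = 0
              · simp only [hLdef, h, if_true]
                exact (le_abs_self _).trans (le_max_left _ _)
              · simp only [hLdef, h, if_false]
                exact (le_abs_self _).trans (le_max_right _ _)
          _ = (n : ℝ) * max |Real.log L0| |Real.log L1| := by
              simp [mul_comm]
      have hn' : (0 : ℝ) < n := by exact_mod_cast hn
      have : u n ≤ (1 / (n : ℝ)) * ((n : ℝ) * max |Real.log L0| |Real.log L1|) :=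
        mul_le_mul_of_nonneg_left hsum (by positivity)
      refine this.trans ?_
      rw [one_div, inv_mul_cancel_left₀ (ne_of_gt hn')]
      exact le_max_right _ _
  have hlim' : limsup u atTop < limsup u atTop / 2 := by
    have : limsup u atTop < 0 := hlim
    linarith
  have hc0 : limsup u atTop / 2 < 0 := by
    have : limsup u atTop < 0 := hlim
    linarith
  set c := limsup u atTop / 2 with hcdef
  have hev : ∀ᶠ n in atTop, u n < c := eventually_lt_of_limsup_lt hlim' hbdd
  obtain ⟨N, hN⟩ := Filter.eventually_atTop.mp hev
  -- for large n, the product is < (exp c)^n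
  have hprodlt : ∀ n, N ≤ n → 1 ≤ n → (∏ k ∈ Finset.range n, L k) < (Real.exp c) ^ n := by
    intro n hn hn1
    have hun := hN n hn
    have hn' : (0 : ℝ) < n := by exact_mod_cast hn1
    have hsum : ∑ k ∈ Finset.range n, Real.log (L k) < c * n := by
      have h2 : ∑ k ∈ Finset.range n, Real.log (L k) = (n : ℝ) * u n := by
        simp only [hudef]
        field_simp
      rw [h2]
      calc (n : ℝ) * u n < (n : ℝ) * c := (mul_lt_mul_iff_right₀ hn').mpr hun
        _ = c * n := mul_comm _ _
    have hexp : (∏ k ∈ Finset.range n, L k) = Real.exp (∑ k ∈ Finset.range n, Real.log (L k)) := by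
      rw [Real.exp_sum]
      exact Finset.prod_congr rfl fun k _ => (Real.exp_log (hLpos k)).symm
    rw [hexp]
    calc Real.exp (∑ k ∈ Finset.range n, Real.log (L k)) < Real.exp (c * n) :=
          Real.exp_lt_exp.mpr hsum
      _ = (Real.exp c) ^ n := by rw [mul_comm, Real.exp_nat_mul]
  -- the bounding sequence tends to 0
  have hec1 : Real.exp c < 1 := Real.exp_lt_one_iff.mpr hc0
  have hec0 : 0 ≤ Real.exp c := (Real.exp_pos c).le
  have htend : Tendsto (fun n : ℕ => ENNReal.ofReal ((Real.exp c) ^ n * (b - a))) atTop (𝓝 0) := by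
    have h1 : Tendsto (fun n : ℕ => (Real.exp c) ^ n * (b - a)) atTop (𝓝 (0 * (b - a))) :=
      (tendsto_pow_atTop_nhds_zero_of_lt_one hec0 hec1).mul_const _
    rw [zero_mul] at h1
    have := (ENNReal.continuous_ofReal.tendsto 0).comp h1
    simpa [Function.comp_def] using this
  have hle : EMetric.diam (Iset a b fI ξ) ≤ 0 := by
    apply ge_of_tendsto htend
    filter_upwards [Filter.eventually_atTop.mpr ⟨max N 1, fun n hn => hn⟩] with n hn
    have hn1 : 1 ≤ n := le_trans (le_max_right N 1) hn
    have hnN : N ≤ n := le_trans (le_max_left N 1) hn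
    obtain ⟨m, rfl⟩ := Nat.exists_eq_add_of_le hn1
    refine (hdiam m).trans ?_
    apply ENNReal.ofReal_le_ofReal
    have : (1 + m) = m + 1 := by ring
    apply mul_le_mul_of_nonneg_right _ (by linarith : (0:ℝ) ≤ b - a)
    rw [this] at hnN ⊢
    exact (hprodlt (m+1) hnN (by omega)).le
  exact le_antisymm hle zero_le

end
end
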